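/- arXiv:1108.3208 — 3 statements merged into one kernel-verified Lean document; each statement's English description precedes it below -/
import Mathlib

section
/- Let V and W be operator spaces. The algebraic tensor product V⊗W is complete with respect to the operator space projective tensor norm ‖·‖_∧ if and only if V or W is finite dimensional. -/
/-!
Common definitions for formalizing "Spectral synthesis for the operator space
projective tensor product of C*-algebras" (Jain–Kumar).
-/

noncomputable section

open scoped TensorProduct
open Topology Filter

/-- The operator norm of a (rectangular) complex scalar matrix, viewed as an operator
between the corresponding Euclidean (ℓ²) spaces. -/
noncomputable def matOpNormC {m n : Type} [Fintype m] [Fintype n] (γ : Matrix m n ℂ) : ℝ :=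
  sSup {r | ∃ x : n → ℂ, (∑ j, ‖x j‖ ^ 2) ≤ 1 ∧ r = Real.sqrt (∑ i, ‖∑ j, γ i j * x j‖ ^ 2)}

/-- An (abstract) operator space structure on a complex normed space `V`:
a family of matrix norms on the square matrix levels `Mₙ(V)` satisfying Ruan's axioms
and extending the norm of `V` at the first level. -/
structure OperatorSpaceStructure (V : Type) [NormedAddCommGroup V] [NormedSpace ℂ V] where
  matNorm : ∀ {p : ℕ}, Matrix (Fin p) (Fin p) V → ℝ
  matNorm_one : ∀ v : Matrix (Fin 1) (Fin 1) V, matNorm v = ‖v 0 0‖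
  matNorm_add_le : ∀ {p : ℕ} (v w : Matrix (Fin p) (Fin p) V),
    matNorm (v + w) ≤ matNorm v + matNorm w
  matNorm_smul : ∀ {p : ℕ} (c : ℂ) (v : Matrix (Fin p) (Fin p) V),
    matNorm (c • v) = ‖c‖ * matNorm v
  matNorm_eq_zero_iff : ∀ {p : ℕ} (v : Matrix (Fin p) (Fin p) V), matNorm v = 0 ↔ v = 0
  /-- Ruan's axiom: `‖γ v δ‖ ≤ ‖γ‖ ‖v‖ ‖δ‖` for scalar matrices `γ, δ`. -/
  matNorm_comp_le : ∀ {p q : ℕ} (γ : Matrix (Fin q) (Fin p) ℂ) (v : Matrix (Fin p) (Fin p) V)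
    (δ : Matrix (Fin p) (Fin q) ℂ),
    matNorm (Matrix.of fun i j => ∑ k, ∑ l, (γ i k * δ l j) • v k l) ≤
      matOpNormC γ * matNorm v * matOpNormC δ
  /-- Ruan's axiom: the norm of a direct sum is the maximum of the norms. -/
  matNorm_dirSum : ∀ {p q : ℕ} (v : Matrix (Fin p) (Fin p) V) (w : Matrix (Fin q) (Fin q) V),
    matNorm (Matrix.reindex finSumFinEquiv finSumFinEquiv (Matrix.fromBlocks v 0 0 w)) =
      max (matNorm v) (matNorm w)

/-- The operator space projective tensor norm `‖u‖_∧` of `u ∈ V ⊗ W`, with respect to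
given operator space structures on `V` and `W`:
`‖u‖_∧ = inf {‖α‖‖v‖‖w‖‖β‖ : u = α (v ⊗ w) β}`, where `α ∈ M_{1,pq}(ℂ)`,
`v ∈ M_p(V)`, `w ∈ M_q(W)`, `β ∈ M_{pq,1}(ℂ)`. -/
noncomputable def osProjNorm {V W : Type} [NormedAddCommGroup V] [NormedSpace ℂ V]
    [NormedAddCommGroup W] [NormedSpace ℂ W]
    (osV : OperatorSpaceStructure V) (osW : OperatorSpaceStructure W) (u : V ⊗[ℂ] W) : ℝ :=
  sInf {r | ∃ (p q : ℕ) (α : Matrix (Fin 1) (Fin p × Fin q) ℂ) (v : Matrix (Fin p) (Fin p) V)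
    (w : Matrix (Fin q) (Fin q) W) (β : Matrix (Fin p × Fin q) (Fin 1) ℂ),
    u = ∑ i, ∑ j, ∑ k, ∑ l, (α 0 (i, k) * β (j, l) 0) • (v i j ⊗ₜ[ℂ] w k l) ∧
    r = matOpNormC α * osV.matNorm v * osW.matNorm w * matOpNormC β}

section StarReps

/-- A `*`-homomorphism of a complex `*`-algebra on some Hilbert space (no contractivity
required). -/
structure StarHomOn (W : Type) [NonUnitalNonAssocSemiring W] [Module ℂ W] [Star W] where
  carrier : Type
  [normedAddCommGroup : NormedAddCommGroup carrier]
  [innerProductSpace : InnerProductSpace ℂ carrier]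
  [completeSpace : CompleteSpace carrier]
  hom : W →⋆ₙₐ[ℂ] (carrier →L[ℂ] carrier)

attribute [instance] StarHomOn.normedAddCommGroup StarHomOn.innerProductSpace
  StarHomOn.completeSpace

/-- A `*`-representation of a Banach `*`-algebra on some Hilbert space: a contractive
`*`-homomorphism into the bounded operators. -/
structure StarRepOn (X : Type) [NonUnitalNonAssocSemiring X] [Module ℂ X] [Star X] [Norm X] where
  carrier : Type
  [normedAddCommGroup : NormedAddCommGroup carrier]
  [innerProductSpace : InnerProductSpace ℂ carrier]
  [completeSpace : CompleteSpace carrier]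
  hom : X →⋆ₙₐ[ℂ] (carrier →L[ℂ] carrier)
  contractive : ∀ x, ‖hom x‖ ≤ ‖x‖

attribute [instance] StarRepOn.normedAddCommGroup StarRepOn.innerProductSpace
  StarRepOn.completeSpace

/-- Topological irreducibility of a `*`-representation: it is nonzero and the only closed
invariant subspaces are `⊥` and `⊤`. -/
def StarRepOn.IsIrreducible {X : Type} [NonUnitalNonAssocSemiring X] [Module ℂ X] [Star X]
    [Norm X] (ρ : StarRepOn X) : Prop :=
  (∃ x, ρ.hom x ≠ 0) ∧
    ∀ U : Submodule ℂ ρ.carrier, IsClosed (U : Set ρ.carrier) →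
      (∀ x : X, ∀ v ∈ U, ρ.hom x v ∈ U) → U = ⊥ ∨ U = ⊤

end StarReps

section BanachStar

variable (X : Type) [NonUnitalNormedRing X] [StarRing X] [NormedSpace ℂ X]

/-- A closed two-sided ideal of `X`. -/
def IsClosedIdeal (I : Submodule ℂ X) : Prop :=
  IsClosed (I : Set X) ∧ (∀ x : X, ∀ y ∈ I, x * y ∈ I) ∧ (∀ x : X, ∀ y ∈ I, y * x ∈ I)

/-- A `*`-ideal: an ideal closed under the involution. -/
def IsStarIdeal (I : Submodule ℂ X) : Prop := ∀ x ∈ I, star x ∈ I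

/-- A primitive ideal of `X`: the kernel of an irreducible `*`-representation of `X` on a
Hilbert space. -/
def IsPrimitiveIdeal (P : Submodule ℂ X) : Prop :=
  ∃ ρ : StarRepOn X, ρ.IsIrreducible ∧ (P : Set X) = {x | ρ.hom x = 0}

/-- The hull of a subset `M` of `X`: all primitive ideals containing `M`. -/
def hullOf (M : Set X) : Set (Submodule ℂ X) := {P | IsPrimitiveIdeal X P ∧ M ⊆ (P : Set X)}

/-- The kernel of a collection of ideals: their intersection. -/
def kernelOf (E : Set (Submodule ℂ X)) : Submodule ℂ X := sInf E

/-- A set of primitive ideals which is closed in the hull-kernel topology: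
`E = h(k(E))`. -/
def IsHkClosed (E : Set (Submodule ℂ X)) : Prop :=
  (∀ P ∈ E, IsPrimitiveIdeal X P) ∧ hullOf X (kernelOf X E : Set X) = E

/-- A (closed) subset `E` of `Prim(X)` is spectral if `k(E)` is the only closed ideal of `X`
whose hull equals `E`. -/
def IsSpectralSet (E : Set (Submodule ℂ X)) : Prop :=
  ∀ J : Submodule ℂ X, IsClosedIdeal X J → hullOf X (J : Set X) = E → J = kernelOf X E

/-- `X` has spectral synthesis if every hull-kernel closed subset of `Prim(X)` is spectral. -/
def HasSpectralSynthesis : Prop :=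
  ∀ E : Set (Submodule ℂ X), IsHkClosed X E → IsSpectralSet X E

/-- The Wiener property: every proper closed two-sided ideal of `X` is annihilated by some
irreducible `*`-representation, i.e. is contained in a primitive ideal. -/
def WienerProperty : Prop :=
  ∀ I : Submodule ℂ X, IsClosedIdeal X I → I ≠ ⊤ → ∃ P, IsPrimitiveIdeal X P ∧ I ≤ P

/-- The topology `τ_w` on the collection of ideals of `X`, generated by the sub-basic open
sets `Z_J = {I : I ⊉ J}` for closed ideals `J`. -/
def tauW : TopologicalSpace (Submodule ℂ X) :=
  .generateFrom {S | ∃ J : Submodule ℂ X, IsClosedIdeal X J ∧ S = {I | ¬ J ≤ I}}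

/-- A (two-sided) bounded approximate identity for an ideal `J` of `X`. -/
def HasBoundedApproxIdentity (J : Submodule ℂ X) : Prop :=
  ∃ (ι : Type) (l : Filter ι) (e : ι → X) (C : ℝ), l.NeBot ∧ (∀ i, e i ∈ J ∧ ‖e i‖ ≤ C) ∧
    ∀ y ∈ J, Filter.Tendsto (fun i => e i * y) l (nhds y) ∧
      Filter.Tendsto (fun i => y * e i) l (nhds y)

/-- A closed prime ideal of `X`: a proper closed ideal `P` such that `I·J ⊆ P` implies
`I ⊆ P` or `J ⊆ P` for closed ideals `I`, `J`. -/
def IsPrimeIdeal (P : Submodule ℂ X) : Prop :=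
  IsClosedIdeal X P ∧ P ≠ ⊤ ∧
    ∀ I J : Submodule ℂ X, IsClosedIdeal X I → IsClosedIdeal X J →
      (∀ x ∈ I, ∀ y ∈ J, x * y ∈ P) → I ≤ P ∨ J ≤ P

/-- The closed ideal generated by products of elements of `J` and `K`. -/
def mulIdeal (J K : Submodule ℂ X) : Submodule ℂ X :=
  (Submodule.span ℂ {z : X | ∃ x ∈ J, ∃ y ∈ K, z = x * y}).topologicalClosure

end BanachStar

section Models

variable (X : Type) [NonUnitalNormedRing X] [StarRing X] [NormedSpace ℂ X]

/-- A realization of a closed `*`-ideal `J` of `X` as a Banach `*`-algebra `Y`: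
an isometric `*`-isomorphism of `Y` onto `J`. -/
structure SubalgebraModel (J : Submodule ℂ X) (Y : Type) [NonUnitalNormedRing Y] [StarRing Y]
    [NormedSpace ℂ Y] where
  incl : Y →⋆ₙₐ[ℂ] X
  isometric : ∀ y, ‖incl y‖ = ‖y‖
  range_eq : Set.range incl = (J : Set X)

/-- A realization of the quotient Banach `*`-algebra `X/J`: a surjective `*`-homomorphism
with kernel `J`, carrying the quotient norm. -/
structure QuotientModel (J : Submodule ℂ X) (Z : Type) [NonUnitalNormedRing Z] [StarRing Z]
    [NormedSpace ℂ Z] where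
  proj : X →⋆ₙₐ[ℂ] Z
  surjective : Function.Surjective proj
  ker_eq : ∀ x, proj x = 0 ↔ x ∈ J
  norm_eq : ∀ x, ‖proj x‖ = Metric.infDist x (J : Set X)

end Models

section CStarTensor

/-- The canonical C*-norm on square matrices over a C*-algebra `A`, described as the
supremum of `‖π v‖` over all `*`-homomorphisms `π` of `M_p(A)` on Hilbert spaces. -/
noncomputable def matCStarNorm {A : Type} [NonUnitalCStarAlgebra A] {p : ℕ}
    (v : Matrix (Fin p) (Fin p) A) : ℝ :=
  sSup {r | ∃ ρ : StarHomOn (Matrix (Fin p) (Fin p) A), r = ‖ρ.hom v‖}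

/-- The operator space projective tensor norm `‖·‖_∧` on the algebraic tensor product
`A ⊗ B` of two C*-algebras. -/
noncomputable def projTensorNorm (A B : Type) [NonUnitalCStarAlgebra A] [NonUnitalCStarAlgebra B]
    (u : A ⊗[ℂ] B) : ℝ :=
  sInf {r | ∃ (p q : ℕ) (α : Matrix (Fin 1) (Fin p × Fin q) ℂ) (v : Matrix (Fin p) (Fin p) A)
    (w : Matrix (Fin q) (Fin q) B) (β : Matrix (Fin p × Fin q) (Fin 1) ℂ),
    u = ∑ i, ∑ j, ∑ k, ∑ l, (α 0 (i, k) * β (j, l) 0) • (v i j ⊗ₜ[ℂ] w k l) ∧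
    r = matOpNormC α * matCStarNorm v * matCStarNorm w * matOpNormC β}

/-- A realization of the operator space projective tensor product `A ⊗̂ B` of two
C*-algebras: a Banach `*`-algebra `X` containing `A ⊗ B` isometrically (for `‖·‖_∧`) and
densely, with multiplication and involution induced by the natural ones. -/
structure OSProjTensorProduct (A B : Type) [NonUnitalCStarAlgebra A] [NonUnitalCStarAlgebra B]
    (X : Type) [NonUnitalNormedRing X] [StarRing X] [NormedSpace ℂ X] [CompleteSpace X] where
  emb : (A ⊗[ℂ] B) →ₗ[ℂ] X
  norm_emb : ∀ u, ‖emb u‖ = projTensorNorm A B u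
  dense_range : DenseRange fun u => emb u
  mul_emb : ∀ (a c : A) (b d : B),
    emb (a ⊗ₜ[ℂ] b) * emb (c ⊗ₜ[ℂ] d) = emb ((a * c) ⊗ₜ[ℂ] (b * d))
  star_emb : ∀ (a : A) (b : B), star (emb (a ⊗ₜ[ℂ] b)) = emb (star a ⊗ₜ[ℂ] star b)

/-- A realization of a C*-tensor norm completion of `A ⊗ B`: a C*-algebra `Y` containing
`A ⊗ B` injectively and densely, with the natural multiplication and involution. -/
structure CStarTensorRealization (A B : Type) [NonUnitalCStarAlgebra A] [NonUnitalCStarAlgebra B]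
    (Y : Type) [NonUnitalCStarAlgebra Y] where
  emb : (A ⊗[ℂ] B) →ₗ[ℂ] Y
  injective : Function.Injective emb
  dense_range : DenseRange fun u => emb u
  mul_emb : ∀ (a c : A) (b d : B),
    emb (a ⊗ₜ[ℂ] b) * emb (c ⊗ₜ[ℂ] d) = emb ((a * c) ⊗ₜ[ℂ] (b * d))
  star_emb : ∀ (a : A) (b : B), star (emb (a ⊗ₜ[ℂ] b)) = emb (star a ⊗ₜ[ℂ] star b)

/-- A realization of the minimal (spatial) C*-tensor product `A ⊗_min B`: a C*-tensor norm
completion of `A ⊗ B` whose norm is minimal among all C*-tensor norms on `A ⊗ B`. -/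
structure MinTensorProduct (A B : Type) [NonUnitalCStarAlgebra A] [NonUnitalCStarAlgebra B]
    (Y : Type) [NonUnitalCStarAlgebra Y] extends CStarTensorRealization A B Y where
  norm_min : ∀ (Z : Type) [NonUnitalCStarAlgebra Z] (r : CStarTensorRealization A B Z)
    (u : A ⊗[ℂ] B), ‖emb u‖ ≤ ‖r.emb u‖

variable {A B : Type} [NonUnitalCStarAlgebra A] [NonUnitalCStarAlgebra B]
variable {X : Type} [NonUnitalNormedRing X] [StarRing X] [NormedSpace ℂ X] [CompleteSpace X]
variable {Y : Type} [NonUnitalCStarAlgebra Y]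

/-- The product ideal `M ⊗̂ N`: the closure in `A ⊗̂ B` of the span of elementary tensors
`a ⊗ b` with `a ∈ M`, `b ∈ N`. -/
noncomputable def prodIdeal (P : OSProjTensorProduct A B X) (M : Submodule ℂ A)
    (N : Submodule ℂ B) : Submodule ℂ X :=
  (Submodule.span ℂ {x : X | ∃ a ∈ M, ∃ b ∈ N, x = P.emb (a ⊗ₜ[ℂ] b)}).topologicalClosure

/-- The closed ideal `Φ(M, N) = A ⊗̂ N + M ⊗̂ B` of `A ⊗̂ B`. -/
noncomputable def PhiIdeal (P : OSProjTensorProduct A B X) (M : Submodule ℂ A)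
    (N : Submodule ℂ B) : Submodule ℂ X :=
  (prodIdeal P ⊤ N ⊔ prodIdeal P M ⊤).topologicalClosure

/-- The lower ideal `J_l` associated with a closed ideal `J` of `A ⊗̂ B`: the closure of the
span of all elementary tensors belonging to `J`. -/
noncomputable def lowerIdeal (P : OSProjTensorProduct A B X) (J : Submodule ℂ X) :
    Submodule ℂ X :=
  (Submodule.span ℂ {x : X | x ∈ J ∧ ∃ (a : A) (b : B), x = P.emb (a ⊗ₜ[ℂ] b)}).topologicalClosure

/-- The upper ideal `J^u = J_min ∩ (A ⊗̂ B)` associated with a closed ideal `J` of `A ⊗̂ B`,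
where `i : A ⊗̂ B → A ⊗_min B` is the canonical inclusion and `J_min` is the closure of
`i(J)` in `A ⊗_min B`. -/
noncomputable def upperIdeal (i : X →L[ℂ] Y) (J : Submodule ℂ X) : Submodule ℂ X :=
  Submodule.comap (i.toLinearMap) ((Submodule.map (i.toLinearMap) J).topologicalClosure)

/-- `i : X → Y` is the canonical `*`-homomorphism `A ⊗̂ B → A ⊗_min B` for the given
realizations: the continuous map which is the identity on the algebraic tensor product. -/
def IsCanonicalInclusion (P : OSProjTensorProduct A B X) (Mn : MinTensorProduct A B Y)
    (i : X →L[ℂ] Y) : Prop :=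
  ∀ u : A ⊗[ℂ] B, i (P.emb u) = Mn.emb u

/-- A closed ideal `J` of `A ⊗̂ B` is spectral if `J_l = J = J^u`. -/
def IsSpectralIdeal (P : OSProjTensorProduct A B X) (i : X →L[ℂ] Y) (J : Submodule ℂ X) :
    Prop :=
  lowerIdeal P J = J ∧ upperIdeal i J = J

/-- The product ideal `M ⊗_min N` inside a realization of `A ⊗_min B`. -/
noncomputable def minProdIdeal (Mn : MinTensorProduct A B Y) (M : Submodule ℂ A)
    (N : Submodule ℂ B) : Submodule ℂ Y :=
  (Submodule.span ℂ {y : Y | ∃ a ∈ M, ∃ b ∈ N, y = Mn.emb (a ⊗ₜ[ℂ] b)}).topologicalClosure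

/-- A realization of the quotient of a C*-algebra `A` by a closed ideal `M`: a surjective
`*`-homomorphism with kernel `M` (for C*-algebras, such a map automatically carries the
quotient norm). -/
structure CStarQuotientModel (A : Type) [NonUnitalCStarAlgebra A] (M : Submodule ℂ A)
    (A' : Type) [NonUnitalCStarAlgebra A'] where
  proj : A →⋆ₙₐ[ℂ] A'
  surjective : Function.Surjective proj
  ker_eq : ∀ a, proj a = 0 ↔ a ∈ M

end CStarTensor

/-- A realization of the Banach `*`-algebra `A ⊗̂_r A`: the operator space projective tensor
product `A ⊗̂ A` equipped with the reverse involution `(a ⊗ b)* = b* ⊗ a*`. -/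
structure OSProjTensorSquareRev (A : Type) [NonUnitalCStarAlgebra A]
    (X : Type) [NonUnitalNormedRing X] [StarRing X] [NormedSpace ℂ X] [CompleteSpace X] where
  emb : (A ⊗[ℂ] A) →ₗ[ℂ] X
  norm_emb : ∀ u, ‖emb u‖ = projTensorNorm A A u
  dense_range : DenseRange fun u => emb u
  mul_emb : ∀ a b c d : A,
    emb (a ⊗ₜ[ℂ] b) * emb (c ⊗ₜ[ℂ] d) = emb ((a * c) ⊗ₜ[ℂ] (b * d))
  star_emb : ∀ a b : A, star (emb (a ⊗ₜ[ℂ] b)) = emb (star b ⊗ₜ[ℂ] star a)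

end

open scoped TensorProduct

namespace OSAux

variable {m n : Type} [Fintype m] [Fintype n]

def opSet (γ : Matrix m n ℂ) : Set ℝ :=
  {r | ∃ x : n → ℂ, (∑ j, ‖x j‖ ^ 2) ≤ 1 ∧ r = Real.sqrt (∑ i, ‖∑ j, γ i j * x j‖ ^ 2)}

lemma matOpNormC_eq (γ : Matrix m n ℂ) : matOpNormC γ = sSup (opSet γ) := rfl

lemma opSet_nonempty (γ : Matrix m n ℂ) : (opSet γ).Nonempty := by
  refine ⟨_, ⟨0, by simp, rfl⟩⟩

lemma opSet_bddAbove (γ : Matrix m n ℂ) : BddAbove (opSet γ) := by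
  refine ⟨Real.sqrt (∑ i, (∑ j, ‖γ i j‖) ^ 2), ?_⟩
  rintro r ⟨x, hx, rfl⟩
  apply Real.sqrt_le_sqrt
  apply Finset.sum_le_sum
  intro i _
  have hxj : ∀ j, ‖x j‖ ≤ 1 := by
    intro j
    have h1 : ‖x j‖ ^ 2 ≤ 1 := le_trans (Finset.single_le_sum (f := fun j => ‖x j‖ ^ 2)
      (fun j _ => by positivity) (Finset.mem_univ j)) hx
    nlinarith [norm_nonneg (x j)]
  have : ‖∑ j, γ i j * x j‖ ≤ ∑ j, ‖γ i j‖ := by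
    refine le_trans (norm_sum_le _ _) (Finset.sum_le_sum fun j _ => ?_)
    rw [norm_mul]
    exact mul_le_of_le_one_right (norm_nonneg _) (hxj j)
  have h2 : (0:ℝ) ≤ ‖∑ j, γ i j * x j‖ := norm_nonneg _
  nlinarith

lemma matOpNormC_nonneg (γ : Matrix m n ℂ) : 0 ≤ matOpNormC γ := by
  have := le_csSup (opSet_bddAbove γ) (opSet_nonempty γ).choose_spec
  have h0 : (0:ℝ) ∈ opSet γ := by
    refine ⟨0, by simp, ?_⟩
    simp
  simpa [matOpNormC_eq] using le_csSup (opSet_bddAbove γ) h0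

/-- the fundamental bound `‖γ x‖₂² ≤ ‖γ‖² ‖x‖₂²`. -/
lemma mulVec_sq_le (γ : Matrix m n ℂ) (x : n → ℂ) :
    (∑ i, ‖∑ j, γ i j * x j‖ ^ 2) ≤ (matOpNormC γ) ^ 2 * (∑ j, ‖x j‖ ^ 2) := by
  set s : ℝ := ∑ j, ‖x j‖ ^ 2 with hs
  have hs0 : 0 ≤ s := Finset.sum_nonneg fun j _ => by positivity
  rcases eq_or_lt_of_le hs0 with h | h
  · -- s = 0 so x = 0
    have hx : ∀ j, x j = 0 := by
      intro j
      have := (Finset.sum_eq_zero_iff_of_nonneg (fun j _ => by positivity)).mp h.symm j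
        (Finset.mem_univ j)
      simpa [pow_eq_zero_iff] using this
    simp [hx, ← h]
  · set t := Real.sqrt s with ht
    have ht0 : 0 < t := Real.sqrt_pos.mpr h
    set x' : n → ℂ := fun j => (t⁻¹ : ℝ) • x j with hx'
    have hmem : Real.sqrt (∑ i, ‖∑ j, γ i j * x' j‖ ^ 2) ∈ opSet γ := by
      refine ⟨x', ?_, rfl⟩
      have h1 : ∀ j, ‖x' j‖ ^ 2 = t⁻¹ ^ 2 * ‖x j‖ ^ 2 := by
        intro j; simp [hx', norm_smul, mul_pow, abs_of_pos (inv_pos.mpr ht0)]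
      have h2 : (∑ j, ‖x' j‖ ^ 2) = t⁻¹ ^ 2 * s := by
        rw [Finset.sum_congr rfl fun j _ => h1 j, ← Finset.mul_sum]
      have h3 : t ^ 2 = s := by rw [ht, Real.sq_sqrt hs0]
      rw [h2, inv_pow, h3]
      rw [inv_mul_le_iff₀ h, mul_one]
    have hle := le_csSup (opSet_bddAbove γ) hmem
    have hcalc : (∑ i, ‖∑ j, γ i j * x' j‖ ^ 2) = s⁻¹ * ∑ i, ‖∑ j, γ i j * x j‖ ^ 2 := by
      rw [Finset.mul_sum]
      refine Finset.sum_congr rfl fun i _ => ?_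
      have : (∑ j, γ i j * x' j) = (t⁻¹ : ℝ) • ∑ j, γ i j * x j := by
        rw [Finset.smul_sum]
        refine Finset.sum_congr rfl fun j _ => ?_
        simp [hx', smul_eq_mul]; ring
      rw [this, norm_smul, mul_pow]
      have : ‖(t⁻¹:ℝ)‖^2 = s⁻¹ := by
        rw [Real.norm_eq_abs, abs_of_pos (inv_pos.mpr ht0), inv_pow, ht, Real.sq_sqrt hs0]
      rw [this]
    -- from sqrt(s⁻¹ L) ≤ ‖γ‖ conclude L ≤ ‖γ‖² s
    have hL0 : 0 ≤ ∑ i, ‖∑ j, γ i j * x j‖ ^ 2 := Finset.sum_nonneg fun i _ => by positivity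
    have h2 : s⁻¹ * ∑ i, ‖∑ j, γ i j * x j‖ ^ 2 ≤ (matOpNormC γ)^2 := by
      have := Real.sqrt_le_sqrt (le_of_eq hcalc.symm)
      have h3 : Real.sqrt (s⁻¹ * ∑ i, ‖∑ j, γ i j * x j‖ ^ 2) ≤ matOpNormC γ := by
        rw [hcalc] at hle; exact hle
      have := Real.sq_sqrt (by positivity : (0:ℝ) ≤ s⁻¹ * ∑ i, ‖∑ j, γ i j * x j‖ ^ 2)
      nlinarith [Real.sqrt_nonneg (s⁻¹ * ∑ i, ‖∑ j, γ i j * x j‖ ^ 2), matOpNormC_nonneg γ]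
    rw [inv_mul_le_iff₀ h] at h2
    linarith [h2]

lemma mulVec_le (γ : Matrix m n ℂ) (x : n → ℂ) :
    Real.sqrt (∑ i, ‖∑ j, γ i j * x j‖ ^ 2) ≤ matOpNormC γ * Real.sqrt (∑ j, ‖x j‖ ^ 2) := by
  have h := mulVec_sq_le γ x
  have := Real.sqrt_le_sqrt h
  rw [Real.sqrt_mul (by positivity), Real.sqrt_sq (matOpNormC_nonneg γ)] at this
  exact this

end OSAux
namespace OSAux
variable {m n : Type} [Fintype m] [Fintype n]

/-- operator norm of a one-row matrix is at most the ℓ² norm of its entries -/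
lemma row_norm_le (α : Matrix (Fin 1) n ℂ) :
    matOpNormC α ≤ Real.sqrt (∑ j, ‖α 0 j‖ ^ 2) := by
  rw [matOpNormC_eq]
  refine csSup_le (opSet_nonempty α) ?_
  rintro r ⟨x, hx, rfl⟩
  rw [Fin.sum_univ_one]
  rw [Real.sqrt_sq_eq_abs, abs_norm]
  have h1 : ‖∑ j, α 0 j * x j‖ ≤ ∑ j, ‖α 0 j‖ * ‖x j‖ := by
    refine le_trans (norm_sum_le _ _) (Finset.sum_le_sum fun j _ => by rw [norm_mul])
  have h2 : (∑ j, ‖α 0 j‖ * ‖x j‖) ^ 2 ≤ (∑ j, ‖α 0 j‖ ^ 2) * ∑ j, ‖x j‖ ^ 2 :=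
    Finset.sum_mul_sq_le_sq_mul_sq _ _ _
  have h3 : (∑ j, ‖α 0 j‖ * ‖x j‖) ≤ Real.sqrt (∑ j, ‖α 0 j‖ ^ 2) := by
    have hb : (∑ j, ‖α 0 j‖ * ‖x j‖) ^ 2 ≤ (∑ j, ‖α 0 j‖ ^ 2) * 1 :=
      le_trans h2 (by
        have : (0:ℝ) ≤ ∑ j, ‖α 0 j‖ ^ 2 := Finset.sum_nonneg fun j _ => by positivity
        exact mul_le_mul_of_nonneg_left hx this)
    rw [mul_one] at hb
    have := Real.sqrt_le_sqrt hb
    rwa [Real.sqrt_sq (Finset.sum_nonneg fun j _ => by positivity)] at this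
  exact le_trans h1 h3

/-- row applied to a vector -/
lemma row_apply_le (α : Matrix (Fin 1) n ℂ) (x : n → ℂ) :
    ‖∑ j, α 0 j * x j‖ ≤ matOpNormC α * Real.sqrt (∑ j, ‖x j‖ ^ 2) := by
  have := mulVec_le α x
  rw [Fin.sum_univ_one, Real.sqrt_sq_eq_abs, abs_norm] at this
  convert this using 3

/-- ℓ² norm of the entries of a one-column matrix is at most its operator norm -/
lemma col_norm_ge (β : Matrix m (Fin 1) ℂ) :
    Real.sqrt (∑ i, ‖β i 0‖ ^ 2) ≤ matOpNormC β := by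
  rw [matOpNormC_eq]
  refine le_csSup (opSet_bddAbove β) ⟨fun _ => 1, by simp, ?_⟩
  simp [Fin.sum_univ_one]

/-- operator norm of a one-column matrix is at most the ℓ² norm of its entries -/
lemma col_norm_le (β : Matrix m (Fin 1) ℂ) :
    matOpNormC β ≤ Real.sqrt (∑ i, ‖β i 0‖ ^ 2) := by
  rw [matOpNormC_eq]
  refine csSup_le (opSet_nonempty β) ?_
  rintro r ⟨x, hx, rfl⟩
  have hx0 : ‖x 0‖ ≤ 1 := by
    rw [Fin.sum_univ_one] at hx
    nlinarith [norm_nonneg (x 0), sq_nonneg (‖x 0‖ - 1)]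
  have h1 : ∀ i : m, ‖∑ j, β i j * x j‖ ^ 2 = ‖x 0‖ ^ 2 * ‖β i 0‖ ^ 2 := by
    intro i; rw [Fin.sum_univ_one, norm_mul, mul_pow]; ring
  rw [Finset.sum_congr rfl fun i _ => h1 i, ← Finset.mul_sum,
    Real.sqrt_mul (by positivity), Real.sqrt_sq_eq_abs, abs_norm]
  exact mul_le_of_le_one_left (Real.sqrt_nonneg _) hx0

/-- "Kronecker"-type bound -/
lemma kron_norm_le {p q p' q' : Type} [Fintype p] [Fintype q] [Fintype p'] [Fintype q']
    (A : Matrix p p' ℂ) (B : Matrix q q' ℂ) :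
    matOpNormC (Matrix.of fun (ik : p × q) (jl : p' × q') => A ik.1 jl.1 * B ik.2 jl.2) ≤
      matOpNormC A * matOpNormC B := by
  rw [matOpNormC_eq]
  refine csSup_le (opSet_nonempty _) ?_
  rintro r ⟨x, hx, rfl⟩
  have key : (∑ ik : p × q, ‖∑ jl : p' × q', A ik.1 jl.1 * B ik.2 jl.2 * x jl‖ ^ 2) ≤
      (matOpNormC A)^2 * (matOpNormC B)^2 * ∑ jl : p' × q', ‖x jl‖ ^ 2 := by
    have hsplit : ∀ ik : p × q, (∑ jl : p' × q', A ik.1 jl.1 * B ik.2 jl.2 * x jl)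
        = ∑ j : p', A ik.1 j * (∑ l : q', B ik.2 l * x (j, l)) := by
      intro ik
      rw [Fintype.sum_prod_type]
      exact Finset.sum_congr rfl fun j _ => by rw [Finset.mul_sum]; exact Finset.sum_congr rfl fun l _ => by ring
    calc (∑ ik : p × q, ‖∑ jl : p' × q', A ik.1 jl.1 * B ik.2 jl.2 * x jl‖ ^ 2)
        = ∑ k : q, ∑ i : p, ‖∑ j : p', A i j * (∑ l : q', B k l * x (j, l))‖ ^ 2 := by
          rw [Fintype.sum_prod_type]
          rw [Finset.sum_comm]
          exact Finset.sum_congr rfl fun k _ => Finset.sum_congr rfl fun i _ => by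
            rw [hsplit (i, k)]
      _ ≤ ∑ k : q, (matOpNormC A)^2 * ∑ j : p', ‖∑ l : q', B k l * x (j, l)‖ ^ 2 :=
          Finset.sum_le_sum fun k _ => mulVec_sq_le A _
      _ = (matOpNormC A)^2 * ∑ j : p', ∑ k : q, ‖∑ l : q', B k l * x (j, l)‖ ^ 2 := by
          rw [← Finset.mul_sum, Finset.sum_comm]
      _ ≤ (matOpNormC A)^2 * ∑ j : p', (matOpNormC B)^2 * ∑ l : q', ‖x (j, l)‖ ^ 2 := by
          refine mul_le_mul_of_nonneg_left (Finset.sum_le_sum fun j _ => mulVec_sq_le B _) (by positivity)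
      _ = (matOpNormC A)^2 * (matOpNormC B)^2 * ∑ jl : p' × q', ‖x jl‖ ^ 2 := by
          rw [← Finset.mul_sum, Fintype.sum_prod_type, ← mul_assoc]
  have key2 : (∑ ik : p × q, ‖∑ jl : p' × q', A ik.1 jl.1 * B ik.2 jl.2 * x jl‖ ^ 2) ≤
      (matOpNormC A)^2 * (matOpNormC B)^2 := by
    refine le_trans key ?_
    have : (0:ℝ) ≤ (matOpNormC A)^2 * (matOpNormC B)^2 := by positivity
    nlinarith
  have := Real.sqrt_le_sqrt key2
  rwa [Real.sqrt_mul (by positivity), Real.sqrt_sq (matOpNormC_nonneg A),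
    Real.sqrt_sq (matOpNormC_nonneg B)] at this

end OSAux
namespace OSAux

variable {V : Type} [NormedAddCommGroup V] [NormedSpace ℂ V]

lemma matNorm_zero (osV : OperatorSpaceStructure V) {p : ℕ} :
    osV.matNorm (0 : Matrix (Fin p) (Fin p) V) = 0 :=
  (osV.matNorm_eq_zero_iff 0).mpr rfl

lemma matNorm_nonneg (osV : OperatorSpaceStructure V) {p : ℕ}
    (v : Matrix (Fin p) (Fin p) V) : 0 ≤ osV.matNorm v := by
  have h1 := osV.matNorm_add_le v (-v)
  have h2 : osV.matNorm (-v) = osV.matNorm v := by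
    have := osV.matNorm_smul (-1 : ℂ) v
    simpa using this
  have h3 : v + (-v) = 0 := by abel
  rw [h3, matNorm_zero, h2] at h1
  linarith

/-- The norm of a diagonal matrix is at most the sup of the norms of the entries. -/
lemma matNorm_diagonal_le (osV : OperatorSpaceStructure V) :
    ∀ {d : ℕ} (z : Fin d → V) (C : ℝ), 0 ≤ C → (∀ i, ‖z i‖ ≤ C) →
      osV.matNorm (Matrix.diagonal z) ≤ C := by
  intro d
  induction d with
  | zero =>
    intro z C hC _
    have : (Matrix.diagonal z : Matrix (Fin 0) (Fin 0) V) = 0 := by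
      ext i; exact absurd i.2 (by omega)
    rw [this, matNorm_zero]; exact hC
  | succ d ih =>
    intro z C hC hz
    have f : Fin d → V := fun i => z (finSumFinEquiv (Sum.inl i))
    have helim : ∀ s : Fin d ⊕ Fin 1,
        Sum.elim (fun i => z (finSumFinEquiv (Sum.inl i))) (fun i => z (finSumFinEquiv (Sum.inr i))) s
          = z (finSumFinEquiv s) := by
      rintro (a | a) <;> rfl
    have key : (Matrix.diagonal z : Matrix (Fin (d+1)) (Fin (d+1)) V) =
        Matrix.reindex finSumFinEquiv finSumFinEquiv
          (Matrix.fromBlocks (Matrix.diagonal fun i => z (finSumFinEquiv (Sum.inl i))) 0 0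
            (Matrix.diagonal fun i => z (finSumFinEquiv (Sum.inr i)))) := by
      ext i j
      rw [Matrix.reindex_apply, Matrix.submatrix_apply, Matrix.fromBlocks_diagonal,
        Matrix.diagonal_apply, Matrix.diagonal_apply, helim, Equiv.apply_symm_apply]
      by_cases h : i = j
      · simp [h]
      · rw [if_neg h, if_neg (fun hc => h (finSumFinEquiv.symm.injective hc))]
    rw [key, osV.matNorm_dirSum]
    refine max_le (ih _ C hC fun i => hz _) ?_
    have : osV.matNorm (Matrix.diagonal fun i : Fin 1 => z (finSumFinEquiv (Sum.inr i))) =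
        ‖z (finSumFinEquiv (Sum.inr (0 : Fin 1)))‖ := by
      rw [osV.matNorm_one]; simp [Matrix.diagonal_apply]
    rw [this]; exact hz _

set_option maxHeartbeats 1000000 in
/-- Scalar compression: `‖ y v x ‖ ≤ ‖y‖₂ ‖v‖ ‖x‖₂`. -/
lemma matNorm_compress (osV : OperatorSpaceStructure V) {p : ℕ}
    (v : Matrix (Fin p) (Fin p) V) (y x : Fin p → ℂ) :
    ‖∑ k, ∑ l, (y k * x l) • v k l‖ ≤
      Real.sqrt (∑ k, ‖y k‖ ^ 2) * osV.matNorm v * Real.sqrt (∑ l, ‖x l‖ ^ 2) := by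
  have h := osV.matNorm_comp_le (Matrix.of fun (_ : Fin 1) k => y k) v
    (Matrix.of fun l (_ : Fin 1) => x l)
  rw [osV.matNorm_one] at h
  simp only [Matrix.of_apply] at h
  refine le_trans h ?_
  have h1 : matOpNormC (Matrix.of fun (_ : Fin 1) k => y k) ≤ Real.sqrt (∑ k, ‖y k‖ ^ 2) := by
    simpa using row_norm_le (Matrix.of fun (_ : Fin 1) k => y k)
  have h2 : matOpNormC (Matrix.of fun l (_ : Fin 1) => x l) ≤ Real.sqrt (∑ l, ‖x l‖ ^ 2) := by
    simpa using col_norm_le (Matrix.of fun l (_ : Fin 1) => x l)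
  exact mul_le_mul (mul_le_mul h1 le_rfl (matNorm_nonneg osV v) (Real.sqrt_nonneg _)) h2
    (matOpNormC_nonneg _) (mul_nonneg (Real.sqrt_nonneg _) (matNorm_nonneg osV v))

/-- The matrix of values of a continuous functional has operator norm at most
`‖φ‖ * matNorm v`. -/
lemma matOpNormC_functional (osV : OperatorSpaceStructure V) {p : ℕ}
    (v : Matrix (Fin p) (Fin p) V) (φ : V →L[ℂ] ℂ) :
    matOpNormC (Matrix.of fun i j => φ (v i j)) ≤ ‖φ‖ * osV.matNorm v := by
  rw [matOpNormC_eq]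
  refine csSup_le (opSet_nonempty _) ?_
  rintro r ⟨x, hx, rfl⟩
  set u : Fin p → ℂ := fun i => ∑ j, φ (v i j) * x j with hu
  have hRHS : 0 ≤ ‖φ‖ * osV.matNorm v := mul_nonneg (norm_nonneg _) (matNorm_nonneg osV v)
  set S : ℝ := ∑ i, ‖u i‖ ^ 2 with hS
  have hS0 : 0 ≤ S := Finset.sum_nonneg fun i _ => by positivity
  rcases eq_or_lt_of_le hS0 with h | h
  · rw [show (∑ i, ‖∑ j, (Matrix.of fun i j => φ (v i j)) i j * x j‖ ^ 2) = S from rfl, ← h,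
      Real.sqrt_zero]
    exact hRHS
  · set t := Real.sqrt S with ht
    have ht0 : 0 < t := Real.sqrt_pos.mpr h
    set y : Fin p → ℂ := fun i => (starRingEnd ℂ) (u i) / (t : ℂ) with hy
    have hyl2 : Real.sqrt (∑ i, ‖y i‖ ^ 2) ≤ 1 := by
      have : ∀ i, ‖y i‖ ^ 2 = ‖u i‖ ^ 2 / t ^ 2 := by
        intro i
        rw [hy]
        simp only [norm_div, RCLike.norm_conj, Complex.norm_real,
          Real.norm_eq_abs, abs_of_pos ht0, div_pow]
      rw [Finset.sum_congr rfl fun i _ => this i, ← Finset.sum_div,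
        ← hS, ht, Real.sq_sqrt hS0, div_self (ne_of_gt h), Real.sqrt_one]
    have hsum : (∑ i, y i * u i) = (t : ℂ) := by
      have : ∀ i, y i * u i = ((‖u i‖ ^ 2 : ℝ) : ℂ) / (t : ℂ) := by
        intro i
        rw [hy, div_mul_eq_mul_div, Complex.conj_mul']
        norm_cast
      rw [Finset.sum_congr rfl fun i _ => this i, ← Finset.sum_div]
      have hcast : (∑ i : Fin p, ((‖u i‖ ^ 2 : ℝ) : ℂ)) = ((S : ℝ) : ℂ) := by
        rw [hS]; norm_cast
      rw [hcast, show ((S : ℝ) : ℂ) = ((t:ℝ):ℂ)^2 by norm_cast; rw [ht, Real.sq_sqrt hS0]]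
      have htne : ((t:ℝ):ℂ) ≠ 0 := by
        exact_mod_cast Complex.ofReal_ne_zero.mpr (ne_of_gt ht0)
      rw [sq, mul_div_assoc, div_self htne, mul_one]
    have hval : (∑ i, y i * u i) = φ (∑ i, ∑ j, (y i * x j) • v i j) := by
      rw [map_sum]
      refine Finset.sum_congr rfl fun i _ => ?_
      rw [map_sum, hu, Finset.mul_sum]
      refine Finset.sum_congr rfl fun j _ => ?_
      rw [map_smul, smul_eq_mul]; ring
    have hb : ‖φ (∑ i, ∑ j, (y i * x j) • v i j)‖ ≤
        ‖φ‖ * ‖∑ i, ∑ j, (y i * x j) • v i j‖ := φ.le_opNorm _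
    have hc := matNorm_compress osV v y x
    have hx' : Real.sqrt (∑ j, ‖x j‖ ^ 2) ≤ 1 := by
      rw [show (1:ℝ) = Real.sqrt 1 by rw [Real.sqrt_one]]
      exact Real.sqrt_le_sqrt hx
    have ht_eq : t = ‖φ (∑ i, ∑ j, (y i * x j) • v i j)‖ := by
      rw [← hval, hsum, Complex.norm_real, Real.norm_eq_abs, abs_of_pos ht0]
    have hfinal : t ≤ ‖φ‖ * osV.matNorm v := by
      rw [ht_eq]
      refine le_trans hb ?_
      have hnv := matNorm_nonneg osV v
      have h1 : ‖∑ i, ∑ j, (y i * x j) • v i j‖ ≤ osV.matNorm v := by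
        refine le_trans hc ?_
        have h4 : Real.sqrt (∑ i, ‖y i‖ ^ 2) * osV.matNorm v * Real.sqrt (∑ j, ‖x j‖ ^ 2) ≤
            1 * osV.matNorm v * 1 :=
          mul_le_mul (mul_le_mul hyl2 le_rfl hnv (by positivity)) hx'
            (Real.sqrt_nonneg _) (by positivity)
        rw [one_mul, mul_one] at h4
        exact h4
      exact mul_le_mul_of_nonneg_left h1 (norm_nonneg _)
    exact le_trans (le_of_eq rfl) hfinal

end OSAux
namespace OSAux

variable {V W : Type} [NormedAddCommGroup V] [NormedSpace ℂ V]
  [NormedAddCommGroup W] [NormedSpace ℂ W]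

def projSet (osV : OperatorSpaceStructure V) (osW : OperatorSpaceStructure W)
    (u : V ⊗[ℂ] W) : Set ℝ :=
  {r | ∃ (p q : ℕ) (α : Matrix (Fin 1) (Fin p × Fin q) ℂ) (v : Matrix (Fin p) (Fin p) V)
    (w : Matrix (Fin q) (Fin q) W) (β : Matrix (Fin p × Fin q) (Fin 1) ℂ),
    u = ∑ i, ∑ j, ∑ k, ∑ l, (α 0 (i, k) * β (j, l) 0) • (v i j ⊗ₜ[ℂ] w k l) ∧
    r = matOpNormC α * osV.matNorm v * osW.matNorm w * matOpNormC β}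

lemma osProjNorm_eq (osV : OperatorSpaceStructure V) (osW : OperatorSpaceStructure W)
    (u : V ⊗[ℂ] W) : osProjNorm osV osW u = sInf (projSet osV osW u) := rfl

lemma projSet_nonneg (osV : OperatorSpaceStructure V) (osW : OperatorSpaceStructure W)
    (u : V ⊗[ℂ] W) : ∀ r ∈ projSet osV osW u, 0 ≤ r := by
  rintro r ⟨p, q, α, v, w, β, _, rfl⟩
  have := matOpNormC_nonneg α
  have := matOpNormC_nonneg β
  have := matNorm_nonneg osV v
  have := matNorm_nonneg osW w
  positivity

lemma projSet_bddBelow (osV : OperatorSpaceStructure V) (osW : OperatorSpaceStructure W)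
    (u : V ⊗[ℂ] W) : BddBelow (projSet osV osW u) :=
  ⟨0, fun r hr => projSet_nonneg osV osW u r hr⟩

lemma osProjNorm_nonneg (osV : OperatorSpaceStructure V) (osW : OperatorSpaceStructure W)
    (u : V ⊗[ℂ] W) : 0 ≤ osProjNorm osV osW u :=
  Real.sInf_nonneg (projSet_nonneg osV osW u)


/-- Row matrix used in the diagonal representation. -/
noncomputable def diagRow {d : ℕ} (c : Fin d → ℂ) : Matrix (Fin 1) (Fin d × Fin d) ℂ :=
  Matrix.of fun _ ik =>
    if ik.1 = ik.2 then (if c ik.1 = 0 then 0 else c ik.1 / (Real.sqrt ‖c ik.1‖ : ℂ)) else 0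

/-- Column matrix used in the diagonal representation. -/
noncomputable def diagCol {d : ℕ} (c : Fin d → ℂ) : Matrix (Fin d × Fin d) (Fin 1) ℂ :=
  Matrix.of fun jl _ => if jl.1 = jl.2 then ((Real.sqrt ‖c jl.1‖ : ℝ) : ℂ) else 0

lemma diagRow_bound {d : ℕ} (c : Fin d → ℂ) :
    matOpNormC (diagRow c) ≤ Real.sqrt (∑ i, ‖c i‖) := by
  refine le_trans (row_norm_le _) ?_
  apply Real.sqrt_le_sqrt
  rw [Fintype.sum_prod_type]
  refine le_of_eq (Finset.sum_congr rfl fun i _ => ?_)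
  rw [Finset.sum_eq_single i ?h1 (by simp)]
  · simp only [diagRow, Matrix.of_apply, eq_self_iff_true, if_true]
    by_cases hc : c i = 0
    · simp [hc]
    · rw [if_neg hc, norm_div]
      rw [Complex.norm_real, Real.norm_eq_abs,
        abs_of_nonneg (Real.sqrt_nonneg _), div_pow, Real.sq_sqrt (norm_nonneg _),
        pow_two, mul_div_assoc, div_self (norm_ne_zero_iff.mpr hc), mul_one]
  case h1 => intro k _ hk; simp [diagRow, Ne.symm hk]

lemma diagCol_bound {d : ℕ} (c : Fin d → ℂ) :
    matOpNormC (diagCol c) ≤ Real.sqrt (∑ i, ‖c i‖) := by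
  refine le_trans (col_norm_le _) ?_
  apply Real.sqrt_le_sqrt
  rw [Fintype.sum_prod_type]
  refine le_of_eq (Finset.sum_congr rfl fun j _ => ?_)
  rw [Finset.sum_eq_single j ?h1 (by simp)]
  · simp only [diagCol, Matrix.of_apply, eq_self_iff_true, if_true]
    rw [Complex.norm_real, Real.norm_eq_abs, abs_of_nonneg (Real.sqrt_nonneg _),
      Real.sq_sqrt (norm_nonneg _)]
  case h1 => intro k _ hk; simp [diagCol, Ne.symm hk]

set_option maxHeartbeats 1000000 in
/-- The canonical diagonal representation of a finite sum of weighted elementary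
tensors. -/
lemma diag_repr_mem (osV : OperatorSpaceStructure V) (osW : OperatorSpaceStructure W)
    {d : ℕ} (c : Fin d → ℂ) (a : Fin d → V) (b : Fin d → W) :
    (matOpNormC (diagRow c) *
      osV.matNorm (Matrix.diagonal a) * osW.matNorm (Matrix.diagonal b) *
      matOpNormC (diagCol c)) ∈
      projSet osV osW (∑ i, c i • (a i ⊗ₜ[ℂ] b i)) := by
  refine ⟨d, d, diagRow c, Matrix.diagonal a, Matrix.diagonal b, diagCol c, ?_, rfl⟩
  simp only [diagRow, diagCol, Matrix.of_apply, Matrix.diagonal_apply]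
  -- collapse the quadruple sum
  have step : ∀ i : Fin d, (∑ j, ∑ k, ∑ l,
      ((if i = k then (if c i = 0 then 0 else c i / (Real.sqrt ‖c i‖ : ℂ)) else 0) *
        (if j = l then ((Real.sqrt ‖c j‖ : ℝ) : ℂ) else 0)) •
        ((if i = j then a i else 0) ⊗ₜ[ℂ] (if k = l then b k else 0)))
      = c i • (a i ⊗ₜ[ℂ] b i) := by
    intro i
    rw [Finset.sum_eq_single i ?h1 (by simp)]
    · rw [Finset.sum_eq_single i ?h2 (by simp)]
      · rw [Finset.sum_eq_single i ?h3 (by simp)]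
        · simp only [eq_self_iff_true, if_true]
          by_cases hc : c i = 0
          · simp [hc]
          · rw [if_neg hc]
            have hkey : (c i / (Real.sqrt ‖c i‖ : ℂ)) * ((Real.sqrt ‖c i‖ : ℝ) : ℂ) = c i := by
              rw [div_mul_cancel₀]
              exact_mod_cast Complex.ofReal_ne_zero.mpr
                (ne_of_gt (Real.sqrt_pos.mpr (norm_pos_iff.mpr hc)))
            rw [hkey]
        case h3 => intro l _ hl; simp [Ne.symm hl]
      case h2 => intro k _ hk; simp [Ne.symm hk]
    case h1 =>
      intro j _ hj
      simp [Ne.symm hj]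
  exact (Finset.sum_congr rfl fun i _ => (step i)).symm

set_option maxHeartbeats 1000000 in
lemma osProjNorm_sum_le (osV : OperatorSpaceStructure V) (osW : OperatorSpaceStructure W)
    {d : ℕ} (c : Fin d → ℂ) (a : Fin d → V) (b : Fin d → W) (A B : ℝ)
    (hA : 0 ≤ A) (hB : 0 ≤ B) (ha : ∀ i, ‖a i‖ ≤ A) (hb : ∀ i, ‖b i‖ ≤ B) :
    osProjNorm osV osW (∑ i, c i • (a i ⊗ₜ[ℂ] b i)) ≤ (∑ i, ‖c i‖) * A * B := by
  have hle := csInf_le (projSet_bddBelow osV osW _) (diag_repr_mem osV osW c a b)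
  rw [osProjNorm_eq]
  refine le_trans hle ?_
  have hS0 : 0 ≤ ∑ i, ‖c i‖ := Finset.sum_nonneg fun i _ => norm_nonneg _
  have hα := diagRow_bound c
  have hβ := diagCol_bound c
  have hv : osV.matNorm (Matrix.diagonal a) ≤ A := matNorm_diagonal_le osV a A hA ha
  have hw : osW.matNorm (Matrix.diagonal b) ≤ B := matNorm_diagonal_le osW b B hB hb
  have n1 := matOpNormC_nonneg (diagRow c)
  have n2 := matNorm_nonneg osV (Matrix.diagonal a)
  have n3 := matNorm_nonneg osW (Matrix.diagonal b)
  have n4 := matOpNormC_nonneg (diagCol c)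
  have h1 : matOpNormC (diagRow c) * osV.matNorm (Matrix.diagonal a) *
      osW.matNorm (Matrix.diagonal b) * matOpNormC (diagCol c) ≤
      Real.sqrt (∑ i, ‖c i‖) * A * B * Real.sqrt (∑ i, ‖c i‖) :=
    mul_le_mul (mul_le_mul (mul_le_mul hα hv n2 (Real.sqrt_nonneg _)) hw n3
      (mul_nonneg (Real.sqrt_nonneg _) hA)) hβ n4
      (mul_nonneg (mul_nonneg (Real.sqrt_nonneg _) hA) hB)
  refine le_trans h1 (le_of_eq ?_)
  rw [show Real.sqrt (∑ i, ‖c i‖) * A * B * Real.sqrt (∑ i, ‖c i‖)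
      = (Real.sqrt (∑ i, ‖c i‖) * Real.sqrt (∑ i, ‖c i‖)) * A * B by ring,
    Real.mul_self_sqrt hS0]

end OSAux
namespace OSAux

variable {V W : Type} [NormedAddCommGroup V] [NormedSpace ℂ V]
  [NormedAddCommGroup W] [NormedSpace ℂ W]

/-- The tensor pairing of two continuous functionals. -/
noncomputable def pairing (φ : V →L[ℂ] ℂ) (ψ : W →L[ℂ] ℂ) : (V ⊗[ℂ] W) →ₗ[ℂ] ℂ :=
  TensorProduct.lift (((LinearMap.mul ℂ ℂ).comp φ.toLinearMap).compl₂ ψ.toLinearMap)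

@[simp] lemma pairing_tmul (φ : V →L[ℂ] ℂ) (ψ : W →L[ℂ] ℂ) (x : V) (y : W) :
    pairing φ ψ (x ⊗ₜ[ℂ] y) = φ x * ψ y := rfl

lemma exists_fin_sum (u : V ⊗[ℂ] W) :
    ∃ (d : ℕ) (a : Fin d → V) (b : Fin d → W), u = ∑ i, (1 : ℂ) • (a i ⊗ₜ[ℂ] b i) := by
  obtain ⟨s, rfl⟩ := TensorProduct.exists_finset u
  refine ⟨s.card, fun i => ((s.equivFin.symm i) : V × W).1,
    fun i => ((s.equivFin.symm i) : V × W).2, ?_⟩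
  have h1 : (∑ i ∈ s, i.1 ⊗ₜ[ℂ] i.2) = ∑ x : {x // x ∈ s}, (x : V × W).1 ⊗ₜ[ℂ] (x : V × W).2 :=
    (Finset.sum_coe_sort s fun y : V × W => y.1 ⊗ₜ[ℂ] y.2).symm
  have h2 : (∑ x : {x // x ∈ s}, (x : V × W).1 ⊗ₜ[ℂ] (x : V × W).2)
      = ∑ i : Fin s.card, ((s.equivFin.symm i : V × W).1 ⊗ₜ[ℂ] (s.equivFin.symm i : V × W).2) :=
    (Equiv.sum_comp s.equivFin.symm
      (fun x : {x // x ∈ s} => (x : V × W).1 ⊗ₜ[ℂ] (x : V × W).2)).symm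
  rw [h1, h2]
  simp [one_smul]

lemma projSet_nonempty (osV : OperatorSpaceStructure V) (osW : OperatorSpaceStructure W)
    (u : V ⊗[ℂ] W) : (projSet osV osW u).Nonempty := by
  obtain ⟨d, a, b, rfl⟩ := exists_fin_sum u
  exact ⟨_, diag_repr_mem osV osW (fun _ => (1 : ℂ)) a b⟩

set_option maxHeartbeats 1000000 in
lemma pairing_le_of_mem (osV : OperatorSpaceStructure V) (osW : OperatorSpaceStructure W)
    (φ : V →L[ℂ] ℂ) (ψ : W →L[ℂ] ℂ) (u : V ⊗[ℂ] W) :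
    ∀ r ∈ projSet osV osW u, ‖pairing φ ψ u‖ ≤ (‖φ‖ * ‖ψ‖) * r := by
  rintro r ⟨p, q, α, v, w, β, hu, rfl⟩
  have h2 : pairing φ ψ u = ∑ ik : Fin p × Fin q, α 0 ik *
      ∑ jl : Fin p × Fin q, (φ (v ik.1 jl.1) * ψ (w ik.2 jl.2)) * β jl 0 := by
    rw [hu]
    simp only [map_sum, map_smul, pairing_tmul, smul_eq_mul]
    rw [Fintype.sum_prod_type]
    refine Finset.sum_congr rfl fun i _ => ?_
    rw [Finset.sum_comm]
    refine Finset.sum_congr rfl fun k _ => ?_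
    rw [Finset.mul_sum, Fintype.sum_prod_type]
    refine Finset.sum_congr rfl fun j _ => ?_
    refine Finset.sum_congr rfl fun l _ => ?_
    ring
  set C : Matrix (Fin p × Fin q) (Fin p × Fin q) ℂ :=
    Matrix.of fun ik jl => (Matrix.of fun i j => φ (v i j)) ik.1 jl.1 *
      (Matrix.of fun k l => ψ (w k l)) ik.2 jl.2 with hC
  have hstep1 : ‖pairing φ ψ u‖ ≤ matOpNormC α *
      Real.sqrt (∑ ik : Fin p × Fin q, ‖∑ jl : Fin p × Fin q, C ik jl * β jl 0‖ ^ 2) := by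
    rw [h2]
    exact row_apply_le α _
  have hstep2 : Real.sqrt (∑ ik : Fin p × Fin q, ‖∑ jl : Fin p × Fin q, C ik jl * β jl 0‖ ^ 2) ≤
      matOpNormC C * Real.sqrt (∑ jl : Fin p × Fin q, ‖β jl 0‖ ^ 2) := mulVec_le C _
  have hstep3 : Real.sqrt (∑ jl : Fin p × Fin q, ‖β jl 0‖ ^ 2) ≤ matOpNormC β := col_norm_ge β
  have hstep4 : matOpNormC C ≤ matOpNormC (Matrix.of fun i j => φ (v i j)) *
      matOpNormC (Matrix.of fun k l => ψ (w k l)) := kron_norm_le _ _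
  have hstep5 : matOpNormC (Matrix.of fun i j => φ (v i j)) ≤ ‖φ‖ * osV.matNorm v :=
    matOpNormC_functional osV v φ
  have hstep6 : matOpNormC (Matrix.of fun k l => ψ (w k l)) ≤ ‖ψ‖ * osW.matNorm w :=
    matOpNormC_functional osW w ψ
  have nα := matOpNormC_nonneg α
  have nβ := matOpNormC_nonneg β
  have nC := matOpNormC_nonneg C
  have nA := matOpNormC_nonneg (Matrix.of fun i j => φ (v i j))
  have nB := matOpNormC_nonneg (Matrix.of fun k l => ψ (w k l))
  have nv := matNorm_nonneg osV v
  have nw := matNorm_nonneg osW w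
  have hCfin : matOpNormC C ≤ (‖φ‖ * osV.matNorm v) * (‖ψ‖ * osW.matNorm w) :=
    le_trans hstep4 (mul_le_mul hstep5 hstep6 nB (by positivity))
  calc ‖pairing φ ψ u‖
      ≤ matOpNormC α * (matOpNormC C * matOpNormC β) := by
        refine le_trans hstep1 (mul_le_mul_of_nonneg_left ?_ nα)
        exact le_trans hstep2 (mul_le_mul_of_nonneg_left hstep3 nC)
    _ ≤ matOpNormC α * (((‖φ‖ * osV.matNorm v) * (‖ψ‖ * osW.matNorm w)) * matOpNormC β) := by
        refine mul_le_mul_of_nonneg_left (mul_le_mul_of_nonneg_right hCfin nβ) nα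
    _ = (‖φ‖ * ‖ψ‖) * (matOpNormC α * osV.matNorm v * osW.matNorm w * matOpNormC β) := by
        ring

lemma pairing_le (osV : OperatorSpaceStructure V) (osW : OperatorSpaceStructure W)
    (φ : V →L[ℂ] ℂ) (ψ : W →L[ℂ] ℂ) (u : V ⊗[ℂ] W) :
    ‖pairing φ ψ u‖ ≤ (‖φ‖ * ‖ψ‖) * osProjNorm osV osW u := by
  have key := pairing_le_of_mem osV osW φ ψ u
  obtain ⟨r0, hr0⟩ := projSet_nonempty osV osW u
  by_cases hK : ‖φ‖ * ‖ψ‖ = 0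
  · have h := key r0 hr0
    rw [hK, zero_mul] at h ⊢
    exact h
  · have hKpos : 0 < ‖φ‖ * ‖ψ‖ :=
      lt_of_le_of_ne (by positivity) (Ne.symm hK)
    rw [osProjNorm_eq, mul_comm, ← div_le_iff₀ hKpos]
    refine le_csInf ⟨r0, hr0⟩ fun r hr => ?_
    rw [div_le_iff₀ hKpos, mul_comm]
    exact key r hr

end OSAux
namespace OSAux

variable {V W : Type} [NormedAddCommGroup V] [NormedSpace ℂ V]
  [NormedAddCommGroup W] [NormedSpace ℂ W]

set_option maxHeartbeats 1000000 in
/-- If `W` is finite dimensional (and `V` complete), the algebraic tensor product is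
complete for the operator space projective norm. -/
lemma complete_of_right [CompleteSpace V] [FiniteDimensional ℂ W]
    (osV : OperatorSpaceStructure V) (osW : OperatorSpaceStructure W)
    (f : ℕ → V ⊗[ℂ] W)
    (hf : ∀ ε : ℝ, 0 < ε → ∃ N : ℕ, ∀ m ≥ N, ∀ n ≥ N, osProjNorm osV osW (f m - f n) < ε) :
    ∃ u : V ⊗[ℂ] W, ∀ ε : ℝ, 0 < ε → ∃ N : ℕ, ∀ n ≥ N, osProjNorm osV osW (f n - u) < ε := by
  classical
  set d := Module.finrank ℂ W with hd
  set bW : Module.Basis (Fin d) ℂ W := Module.finBasis ℂ W with hbW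
  set coeff : Fin d → (V ⊗[ℂ] W) →ₗ[ℂ] V :=
    fun i => TensorProduct.lift (((LinearMap.lsmul ℂ V).comp (bW.coord i)).flip) with hcoeff
  have coeff_tmul : ∀ (i) (x : V) (y : W), coeff i (x ⊗ₜ[ℂ] y) = bW.coord i y • x := by
    intro i x y; simp [hcoeff]
  set ψ : Fin d → (W →L[ℂ] ℂ) :=
    fun i => LinearMap.toContinuousLinearMap (bW.coord i) with hψ
  have ψ_apply : ∀ i y, ψ i y = bW.coord i y := fun i y => rfl
  have hrepr : ∀ x : V ⊗[ℂ] W, x = ∑ i, coeff i x ⊗ₜ[ℂ] bW i := by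
    intro x
    induction x using TensorProduct.induction_on with
    | zero => simp
    | tmul v w =>
      rw [Finset.sum_congr rfl fun i _ => by
        rw [coeff_tmul, TensorProduct.smul_tmul]]
      rw [← TensorProduct.tmul_sum]
      congr 1
      simp only [Module.Basis.coord_apply]
      exact (bW.sum_repr w).symm
    | add x y hx hy =>
      simp only [map_add, TensorProduct.add_tmul, Finset.sum_add_distrib]
      rw [← hx, ← hy]
  have hpair : ∀ (g : V →L[ℂ] ℂ) (i) (x : V ⊗[ℂ] W),
      pairing g (ψ i) x = g (coeff i x) := by
    intro g i x
    induction x using TensorProduct.induction_on with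
    | zero => simp
    | tmul v w =>
      rw [pairing_tmul, coeff_tmul, map_smul, smul_eq_mul, ψ_apply, mul_comm]
    | add x y hx hy => simp [map_add, hx, hy]
  have hcb : ∀ (i) (x : V ⊗[ℂ] W), ‖coeff i x‖ ≤ ‖ψ i‖ * osProjNorm osV osW x := by
    intro i x
    by_cases hz : coeff i x = 0
    · rw [hz, norm_zero]
      exact mul_nonneg (norm_nonneg _) (osProjNorm_nonneg osV osW x)
    · obtain ⟨g, hg1, hg2⟩ := exists_dual_vector ℂ (coeff i x) (norm_ne_zero_iff.mpr hz)
      have := pairing_le osV osW g (ψ i) x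
      rw [hpair, hg2] at this
      rw [RCLike.norm_ofReal, abs_norm, hg1, one_mul] at this
      exact this
  -- each coordinate sequence is Cauchy
  have hcs : ∀ i, CauchySeq (fun n => coeff i (f n)) := by
    intro i
    rw [Metric.cauchySeq_iff]
    intro ε hε
    have hε' : 0 < ε / (‖ψ i‖ + 1) := by positivity
    obtain ⟨N, hN⟩ := hf _ hε'
    refine ⟨N, fun m hm n hn => ?_⟩
    rw [dist_eq_norm, ← map_sub]
    refine lt_of_le_of_lt (hcb i (f m - f n)) ?_
    have h1 : ‖ψ i‖ * osProjNorm osV osW (f m - f n) ≤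
        (‖ψ i‖ + 1) * osProjNorm osV osW (f m - f n) :=
      mul_le_mul_of_nonneg_right (by linarith [norm_nonneg (ψ i)])
        (osProjNorm_nonneg osV osW _)
    refine lt_of_le_of_lt h1 ?_
    have h2 := hN m hm n hn
    have h3 : (0:ℝ) < ‖ψ i‖ + 1 := by positivity
    calc (‖ψ i‖ + 1) * osProjNorm osV osW (f m - f n)
        < (‖ψ i‖ + 1) * (ε / (‖ψ i‖ + 1)) := by
          exact mul_lt_mul_of_pos_left h2 h3
      _ = ε := by field_simp
  choose wlim hwlim using fun i => cauchySeq_tendsto_of_complete (hcs i)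
  refine ⟨∑ i, wlim i ⊗ₜ[ℂ] bW i, ?_⟩
  intro ε hε
  -- uniform bound for the basis vectors
  set Bb : ℝ := 1 + ∑ i, ‖bW i‖ with hBb
  have hBb0 : 0 < Bb := by
    rw [hBb]; positivity
  have hBbi : ∀ i, ‖bW i‖ ≤ Bb := by
    intro i
    rw [hBb]
    have := Finset.single_le_sum (f := fun i => ‖bW i‖) (fun i _ => norm_nonneg _)
      (Finset.mem_univ i)
    linarith
  set δ : ℝ := ε / (2 * (d + 1) * Bb) with hδ
  have hδ0 : 0 < δ := by rw [hδ]; positivity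
  have hNi : ∀ i, ∃ Ni : ℕ, ∀ n ≥ Ni, ‖coeff i (f n) - wlim i‖ ≤ δ := by
    intro i
    have := (Metric.tendsto_atTop.mp (hwlim i)) δ hδ0
    obtain ⟨Ni, hNi⟩ := this
    exact ⟨Ni, fun n hn => le_of_lt (by rw [← dist_eq_norm]; exact hNi n hn)⟩
  choose Ni hNif using hNi
  refine ⟨Finset.univ.sup Ni, fun n hn => ?_⟩
  have hdiff : f n - (∑ i, wlim i ⊗ₜ[ℂ] bW i) =
      ∑ i, (1:ℂ) • ((coeff i (f n) - wlim i) ⊗ₜ[ℂ] bW i) := by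
    conv_lhs => rw [hrepr (f n)]
    rw [← Finset.sum_sub_distrib]
    refine Finset.sum_congr rfl fun i _ => ?_
    rw [one_smul, TensorProduct.sub_tmul]
  rw [hdiff]
  have hbound := osProjNorm_sum_le osV osW (fun _ => (1:ℂ))
    (fun i => coeff i (f n) - wlim i) (fun i => bW i) δ Bb (le_of_lt hδ0) (le_of_lt hBb0)
    (fun i => hNif i n (le_trans (Finset.le_sup (Finset.mem_univ i)) hn))
    (fun i => hBbi i)
  refine lt_of_le_of_lt hbound ?_
  have hsum1 : (∑ _i : Fin d, ‖(1:ℂ)‖) = (d : ℝ) := by simp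
  rw [hsum1]
  rw [hδ]
  rw [div_eq_mul_inv]
  have hlt : (d : ℝ) * Bb < 2 * (d + 1) * Bb := by
    have : (d : ℝ) < 2 * (d + 1) := by
      have : (0:ℝ) ≤ (d:ℝ) := Nat.cast_nonneg d
      linarith
    exact mul_lt_mul_of_pos_right this hBb0
  calc (d : ℝ) * (ε * (2 * (d + 1) * Bb)⁻¹) * Bb
      = (d * Bb) * ((2 * (d + 1) * Bb)⁻¹ * ε) := by ring
    _ < (2 * (d + 1) * Bb) * ((2 * (d + 1) * Bb)⁻¹ * ε) := by
        refine mul_lt_mul_of_pos_right hlt ?_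
        positivity
    _ = ε := by
        rw [← mul_assoc, mul_inv_cancel₀ (by positivity), one_mul]

set_option maxHeartbeats 1000000 in
/-- If `V` is finite dimensional (and `W` complete), the algebraic tensor product is
complete for the operator space projective norm. -/
lemma complete_of_left [CompleteSpace W] [FiniteDimensional ℂ V]
    (osV : OperatorSpaceStructure V) (osW : OperatorSpaceStructure W)
    (f : ℕ → V ⊗[ℂ] W)
    (hf : ∀ ε : ℝ, 0 < ε → ∃ N : ℕ, ∀ m ≥ N, ∀ n ≥ N, osProjNorm osV osW (f m - f n) < ε) :
    ∃ u : V ⊗[ℂ] W, ∀ ε : ℝ, 0 < ε → ∃ N : ℕ, ∀ n ≥ N, osProjNorm osV osW (f n - u) < ε := by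
  classical
  set d := Module.finrank ℂ V with hd
  set bV : Module.Basis (Fin d) ℂ V := Module.finBasis ℂ V with hbV
  set coeff : Fin d → (V ⊗[ℂ] W) →ₗ[ℂ] W :=
    fun i => TensorProduct.lift ((LinearMap.lsmul ℂ W).comp (bV.coord i)) with hcoeff
  have coeff_tmul : ∀ (i) (x : V) (y : W), coeff i (x ⊗ₜ[ℂ] y) = bV.coord i x • y := by
    intro i x y; simp [hcoeff]
  set φc : Fin d → (V →L[ℂ] ℂ) :=
    fun i => LinearMap.toContinuousLinearMap (bV.coord i) with hφc
  have φc_apply : ∀ i x, φc i x = bV.coord i x := fun i x => rfl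
  have hrepr : ∀ x : V ⊗[ℂ] W, x = ∑ i, bV i ⊗ₜ[ℂ] coeff i x := by
    intro x
    induction x using TensorProduct.induction_on with
    | zero => simp
    | tmul v w =>
      rw [Finset.sum_congr rfl fun i _ => by
        rw [coeff_tmul, ← TensorProduct.smul_tmul]]
      rw [← TensorProduct.sum_tmul]
      congr 1
      simp only [Module.Basis.coord_apply]
      exact (bV.sum_repr v).symm
    | add x y hx hy =>
      simp only [map_add, TensorProduct.tmul_add, Finset.sum_add_distrib]
      rw [← hx, ← hy]
  have hpair : ∀ (g : W →L[ℂ] ℂ) (i) (x : V ⊗[ℂ] W),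
      pairing (φc i) g x = g (coeff i x) := by
    intro g i x
    induction x using TensorProduct.induction_on with
    | zero => simp
    | tmul v w =>
      rw [pairing_tmul, coeff_tmul, map_smul, smul_eq_mul, φc_apply]
    | add x y hx hy => simp [map_add, hx, hy]
  have hcb : ∀ (i) (x : V ⊗[ℂ] W), ‖coeff i x‖ ≤ ‖φc i‖ * osProjNorm osV osW x := by
    intro i x
    by_cases hz : coeff i x = 0
    · rw [hz, norm_zero]
      exact mul_nonneg (norm_nonneg _) (osProjNorm_nonneg osV osW x)
    · obtain ⟨g, hg1, hg2⟩ := exists_dual_vector ℂ (coeff i x) (norm_ne_zero_iff.mpr hz)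
      have := pairing_le osV osW (φc i) g x
      rw [hpair, hg2] at this
      rw [RCLike.norm_ofReal, abs_norm, hg1, mul_one] at this
      exact this
  have hcs : ∀ i, CauchySeq (fun n => coeff i (f n)) := by
    intro i
    rw [Metric.cauchySeq_iff]
    intro ε hε
    have hε' : 0 < ε / (‖φc i‖ + 1) := by positivity
    obtain ⟨N, hN⟩ := hf _ hε'
    refine ⟨N, fun m hm n hn => ?_⟩
    rw [dist_eq_norm, ← map_sub]
    refine lt_of_le_of_lt (hcb i (f m - f n)) ?_
    have h1 : ‖φc i‖ * osProjNorm osV osW (f m - f n) ≤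
        (‖φc i‖ + 1) * osProjNorm osV osW (f m - f n) :=
      mul_le_mul_of_nonneg_right (by linarith [norm_nonneg (φc i)])
        (osProjNorm_nonneg osV osW _)
    refine lt_of_le_of_lt h1 ?_
    have h2 := hN m hm n hn
    have h3 : (0:ℝ) < ‖φc i‖ + 1 := by positivity
    calc (‖φc i‖ + 1) * osProjNorm osV osW (f m - f n)
        < (‖φc i‖ + 1) * (ε / (‖φc i‖ + 1)) := by
          exact mul_lt_mul_of_pos_left h2 h3
      _ = ε := by field_simp
  choose wlim hwlim using fun i => cauchySeq_tendsto_of_complete (hcs i)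
  refine ⟨∑ i, bV i ⊗ₜ[ℂ] wlim i, ?_⟩
  intro ε hε
  set Bb : ℝ := 1 + ∑ i, ‖bV i‖ with hBb
  have hBb0 : 0 < Bb := by
    rw [hBb]; positivity
  have hBbi : ∀ i, ‖bV i‖ ≤ Bb := by
    intro i
    rw [hBb]
    have := Finset.single_le_sum (f := fun i => ‖bV i‖) (fun i _ => norm_nonneg _)
      (Finset.mem_univ i)
    linarith
  set δ : ℝ := ε / (2 * (d + 1) * Bb) with hδ
  have hδ0 : 0 < δ := by rw [hδ]; positivity
  have hNi : ∀ i, ∃ Ni : ℕ, ∀ n ≥ Ni, ‖coeff i (f n) - wlim i‖ ≤ δ := by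
    intro i
    have := (Metric.tendsto_atTop.mp (hwlim i)) δ hδ0
    obtain ⟨Ni, hNi⟩ := this
    exact ⟨Ni, fun n hn => le_of_lt (by rw [← dist_eq_norm]; exact hNi n hn)⟩
  choose Ni hNif using hNi
  refine ⟨Finset.univ.sup Ni, fun n hn => ?_⟩
  have hdiff : f n - (∑ i, bV i ⊗ₜ[ℂ] wlim i) =
      ∑ i, (1:ℂ) • (bV i ⊗ₜ[ℂ] (coeff i (f n) - wlim i)) := by
    conv_lhs => rw [hrepr (f n)]
    rw [← Finset.sum_sub_distrib]
    refine Finset.sum_congr rfl fun i _ => ?_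
    rw [one_smul, TensorProduct.tmul_sub]
  rw [hdiff]
  have hbound := osProjNorm_sum_le osV osW (fun _ => (1:ℂ))
    (fun i => bV i) (fun i => coeff i (f n) - wlim i) Bb δ (le_of_lt hBb0) (le_of_lt hδ0)
    (fun i => hBbi i)
    (fun i => hNif i n (le_trans (Finset.le_sup (Finset.mem_univ i)) hn))
  refine lt_of_le_of_lt hbound ?_
  have hsum1 : (∑ _i : Fin d, ‖(1:ℂ)‖) = (d : ℝ) := by simp
  rw [hsum1]
  rw [hδ]
  rw [div_eq_mul_inv]
  have hlt : (d : ℝ) * Bb < 2 * (d + 1) * Bb := by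
    have : (d : ℝ) < 2 * (d + 1) := by
      have : (0:ℝ) ≤ (d:ℝ) := Nat.cast_nonneg d
      linarith
    exact mul_lt_mul_of_pos_right this hBb0
  calc (d : ℝ) * Bb * (ε * (2 * (d + 1) * Bb)⁻¹)
      = (d * Bb) * ((2 * (d + 1) * Bb)⁻¹ * ε) := by ring
    _ < (2 * (d + 1) * Bb) * ((2 * (d + 1) * Bb)⁻¹ * ε) := by
        refine mul_lt_mul_of_pos_right hlt ?_
        positivity
    _ = ε := by
        rw [← mul_assoc, mul_inv_cancel₀ (by positivity), one_mul]

end OSAux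
namespace OSAux

variable {E : Type} [NormedAddCommGroup E] [NormedSpace ℂ E]

set_option maxHeartbeats 1000000 in
lemma biorth_step (h : ¬FiniteDimensional ℂ E) {n : ℕ} (a : Fin n → E)
    (φ : Fin n → E →L[ℂ] ℂ) (hb : ∀ i j, φ i (a j) = if i = j then 1 else 0) :
    ∃ (x : E) (g : E →L[ℂ] ℂ), ‖x‖ ≤ 1 ∧ g x = 1 ∧ (∀ i, φ i x = 0) ∧ (∀ i, g (a i) = 0) := by
  classical
  set S : Submodule ℂ E := Submodule.span ℂ (Set.range a) with hS
  haveI : FiniteDimensional ℂ S := FiniteDimensional.span_of_finite ℂ (Set.finite_range a)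
  have hSne : S ≠ ⊤ := by
    intro htop
    exact h ⟨htop ▸ Submodule.fg_span (Set.finite_range a)⟩
  obtain ⟨x0, hx0⟩ : ∃ x0, x0 ∉ S := by
    by_contra hc; push_neg at hc; exact hSne (Submodule.eq_top_iff'.mpr hc)
  set y : E := x0 - ∑ i, φ i x0 • a i with hy
  have hsummem : (∑ i, φ i x0 • a i) ∈ S :=
    Submodule.sum_mem _ fun i _ => Submodule.smul_mem _ _ (Submodule.subset_span ⟨i, rfl⟩)
  have hymem : y ∉ S := by
    intro hyS
    apply hx0
    have hx0y : x0 = y + ∑ i, φ i x0 • a i := by rw [hy]; abel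
    rw [hx0y]
    exact Submodule.add_mem _ hyS hsummem
  have hyne : y ≠ 0 := fun h0 => hymem (h0 ▸ S.zero_mem)
  have hφy : ∀ i, φ i y = 0 := by
    intro i
    rw [hy, map_sub, map_sum]
    have hterm : ∀ j, φ i (φ j x0 • a j) = if i = j then φ i x0 else 0 := by
      intro j
      rw [map_smul, smul_eq_mul, hb i j]
      by_cases hij : i = j
      · subst hij; simp
      · simp [hij]
    rw [Finset.sum_congr rfl fun j _ => hterm j]
    simp
  haveI hScl : IsClosed (S : Set E) := Submodule.closed_of_finiteDimensional S
  set π : E →L[ℂ] (E ⧸ S) := LinearMap.mkContinuous S.mkQ 1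
    (fun x => by simpa using Submodule.Quotient.norm_mk_le S x) with hπ
  have hπa : ∀ z : E, π z = Submodule.Quotient.mk z := fun z => rfl
  have hmkne : (Submodule.Quotient.mk y : E ⧸ S) ≠ 0 := by
    rw [Ne, Submodule.Quotient.mk_eq_zero]
    exact hymem
  obtain ⟨g0, hg01, hg02⟩ := exists_dual_vector ℂ (Submodule.Quotient.mk y : E ⧸ S) (norm_ne_zero_iff.mpr hmkne)
  set g1 : E →L[ℂ] ℂ := g0.comp π with hg1
  have hg1y : g1 y ≠ 0 := by
    rw [hg1]
    simp only [ContinuousLinearMap.comp_apply, hπa]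
    rw [hg02]
    exact_mod_cast RCLike.ofReal_ne_zero.mpr (norm_ne_zero_iff.mpr hmkne)
  have hg1a : ∀ i, g1 (a i) = 0 := by
    intro i
    rw [hg1]
    simp only [ContinuousLinearMap.comp_apply, hπa]
    rw [show (Submodule.Quotient.mk (a i) : E ⧸ S) = 0 from
      (Submodule.Quotient.mk_eq_zero S).mpr (Submodule.subset_span ⟨i, rfl⟩)]
    exact map_zero g0
  have hnyne : ((‖y‖ : ℝ) : ℂ) ≠ 0 := by
    exact_mod_cast Complex.ofReal_ne_zero.mpr (norm_ne_zero_iff.mpr hyne)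
  refine ⟨((‖y‖ : ℝ) : ℂ)⁻¹ • y, (((‖y‖ : ℝ) : ℂ) * (g1 y)⁻¹) • g1, ?_, ?_, ?_, ?_⟩
  · rw [norm_smul, norm_inv, Complex.norm_real, Real.norm_eq_abs, abs_norm,
      inv_mul_cancel₀ (norm_ne_zero_iff.mpr hyne)]
  · rw [ContinuousLinearMap.smul_apply, map_smul]
    simp only [smul_eq_mul]
    field_simp
  · intro i
    rw [map_smul, hφy i, smul_zero]
  · intro i
    rw [ContinuousLinearMap.smul_apply, hg1a i, smul_zero]

noncomputable def biorthFam (h : ¬FiniteDimensional ℂ E) :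
    ∀ n : ℕ, {p : (Fin n → E) × (Fin n → E →L[ℂ] ℂ) //
      (∀ i, ‖p.1 i‖ ≤ 1) ∧ ∀ i j, p.2 i (p.1 j) = if i = j then 1 else 0}
  | 0 => ⟨(fun i => i.elim0, fun i => i.elim0), fun i => i.elim0, fun i => i.elim0⟩
  | (n+1) =>
    let prev := biorthFam h n
    let st := biorth_step h prev.1.1 prev.1.2 prev.2.2
    ⟨(Fin.snoc prev.1.1 st.choose, Fin.snoc prev.1.2 st.choose_spec.choose), by
      obtain ⟨hx1, hgx, hφx, hga⟩ := st.choose_spec.choose_spec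
      dsimp only
      constructor
      · intro i
        refine Fin.lastCases ?_ ?_ i
        · rw [Fin.snoc_last]; exact hx1
        · intro j; rw [Fin.snoc_castSucc]; exact prev.2.1 j
      · intro i j
        refine Fin.lastCases ?_ ?_ i
        · refine Fin.lastCases ?_ ?_ j
          · rw [Fin.snoc_last, Fin.snoc_last, hgx, if_pos rfl]
          · intro j'
            rw [Fin.snoc_last, Fin.snoc_castSucc,
              if_neg (Ne.symm (ne_of_lt (Fin.castSucc_lt_last j')))]
            exact hga j'
        · intro i'
          refine Fin.lastCases ?_ ?_ j
          · rw [Fin.snoc_last, Fin.snoc_castSucc,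
              if_neg (ne_of_lt (Fin.castSucc_lt_last i'))]
            exact hφx i'
          · intro j'
            rw [Fin.snoc_castSucc, Fin.snoc_castSucc, prev.2.2 i' j']
            by_cases hij : i' = j'
            · subst hij; simp
            · rw [if_neg hij, if_neg (fun hc => hij (Fin.castSucc_injective _ hc))]⟩

lemma biorthFam_succ_fst (h : ¬FiniteDimensional ℂ E) (n : ℕ) (j : Fin n) :
    (biorthFam h (n+1)).1.1 j.castSucc = (biorthFam h n).1.1 j := by
  show (Fin.snoc _ _ : Fin (n+1) → E) j.castSucc = _
  rw [Fin.snoc_castSucc]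

lemma biorthFam_succ_snd (h : ¬FiniteDimensional ℂ E) (n : ℕ) (j : Fin n) :
    (biorthFam h (n+1)).1.2 j.castSucc = (biorthFam h n).1.2 j := by
  show (Fin.snoc _ _ : Fin (n+1) → (E →L[ℂ] ℂ)) j.castSucc = _
  rw [Fin.snoc_castSucc]

lemma exists_biorth (h : ¬FiniteDimensional ℂ E) :
    ∃ (a : ℕ → E) (φ : ℕ → E →L[ℂ] ℂ), (∀ n, ‖a n‖ ≤ 1) ∧
      ∀ i j, φ i (a j) = if i = j then 1 else 0 := by
  classical
  set F := biorthFam h with hF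
  set a : ℕ → E := fun n => (F (n+1)).1.1 (Fin.last n) with ha
  set φ : ℕ → E →L[ℂ] ℂ := fun n => (F (n+1)).1.2 (Fin.last n) with hφ
  have hcoh : ∀ n (i : Fin n), (F n).1.1 i = a (i : ℕ) ∧ (F n).1.2 i = φ (i : ℕ) := by
    intro n
    induction n with
    | zero => intro i; exact i.elim0
    | succ n ih =>
      intro i
      refine Fin.lastCases ?_ ?_ i
      · constructor <;> rfl
      · intro j
        have h1 := biorthFam_succ_fst h n j
        have h2 := biorthFam_succ_snd h n j
        rw [← hF] at h1 h2
        refine ⟨?_, ?_⟩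
        · rw [h1, (ih j).1, Fin.coe_castSucc]
        · rw [h2, (ih j).2, Fin.coe_castSucc]
  refine ⟨a, φ, ?_, ?_⟩
  · intro n
    have := (F (n+1)).2.1 (Fin.last n)
    rwa [ha]
  · intro i j
    set n := max i j + 1 with hn
    have hi : i < n := by omega
    have hj : j < n := by omega
    have h1 := (hcoh n ⟨i, hi⟩).2
    have h2 := (hcoh n ⟨j, hj⟩).1
    have h3 := (F n).2.2 ⟨i, hi⟩ ⟨j, hj⟩
    rw [h1, h2] at h3
    rw [h3]
    by_cases hij : i = j
    · subst hij; simp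
    · rw [if_neg hij, if_neg (fun hc : (⟨i, hi⟩ : Fin n) = ⟨j, hj⟩ => hij (by
        exact congrArg Fin.val hc))]

end OSAux
namespace OSAux

variable {V W : Type} [NormedAddCommGroup V] [NormedSpace ℂ V]
  [NormedAddCommGroup W] [NormedSpace ℂ W]

lemma matOpNormC_neg {m n : Type} [Fintype m] [Fintype n] (γ : Matrix m n ℂ) :
    matOpNormC (-γ) = matOpNormC γ := by
  have hset : opSet (-γ) = opSet γ := by
    ext r
    constructor <;> rintro ⟨x, hx, rfl⟩ <;> refine ⟨x, hx, ?_⟩ <;>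
      refine congrArg Real.sqrt (Finset.sum_congr rfl fun i _ => ?_) <;>
      · congr 1
        rw [show (∑ j, (-γ) i j * x j) = -(∑ j, γ i j * x j) by
          rw [← Finset.sum_neg_distrib]
          exact Finset.sum_congr rfl fun j _ => by rw [Matrix.neg_apply]; ring]
        rw [norm_neg]
  rw [matOpNormC_eq, matOpNormC_eq, hset]

lemma projSet_neg_subset (osV : OperatorSpaceStructure V) (osW : OperatorSpaceStructure W)
    (u : V ⊗[ℂ] W) : projSet osV osW u ⊆ projSet osV osW (-u) := by
  rintro r ⟨p, q, α, v, w, β, hu, rfl⟩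
  refine ⟨p, q, -α, v, w, β, ?_, by rw [matOpNormC_neg]⟩
  rw [hu]
  rw [← Finset.sum_neg_distrib]
  refine Finset.sum_congr rfl fun i _ => ?_
  rw [← Finset.sum_neg_distrib]
  refine Finset.sum_congr rfl fun j _ => ?_
  rw [← Finset.sum_neg_distrib]
  refine Finset.sum_congr rfl fun k _ => ?_
  rw [← Finset.sum_neg_distrib]
  refine Finset.sum_congr rfl fun l _ => ?_
  rw [Matrix.neg_apply, ← neg_smul]
  congr 1
  ring

lemma osProjNorm_neg (osV : OperatorSpaceStructure V) (osW : OperatorSpaceStructure W)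
    (u : V ⊗[ℂ] W) : osProjNorm osV osW (-u) = osProjNorm osV osW u := by
  have h1 := projSet_neg_subset osV osW u
  have h2 := projSet_neg_subset osV osW (-u)
  rw [neg_neg] at h2
  rw [osProjNorm_eq, osProjNorm_eq]
  congr 1
  exact le_antisymm h2 h1

lemma geom_half_sum_le (K : ℕ) : (∑ i ∈ Finset.range K, ((2:ℝ))⁻¹ ^ i) ≤ 2 := by
  have h := geom_sum_eq (by norm_num : ((2:ℝ))⁻¹ ≠ 1) K
  rw [h]
  have h1 : (0:ℝ) ≤ (2:ℝ)⁻¹ ^ K := by positivity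
  rw [div_le_iff_of_neg (by norm_num : (2:ℝ)⁻¹ - 1 < 0)]
  linarith

lemma small_of_forall_le {x : ℂ} {C : ℝ} (hC : 0 ≤ C) (h : ∀ ε : ℝ, 0 < ε → ‖x‖ ≤ C * ε) :
    x = 0 := by
  by_contra hx
  have hp : 0 < ‖x‖ := norm_pos_iff.mpr hx
  rcases eq_or_lt_of_le hC with hC0 | hC0
  · have := h 1 one_pos
    rw [← hC0, zero_mul] at this
    linarith
  · have := h (‖x‖ / (2 * C)) (by positivity)
    rw [show C * (‖x‖ / (2 * C)) = ‖x‖ / 2 by field_simp] at this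
    linarith

set_option maxHeartbeats 2000000 in
lemma not_complete (osV : OperatorSpaceStructure V) (osW : OperatorSpaceStructure W)
    (hV : ¬FiniteDimensional ℂ V) (hW : ¬FiniteDimensional ℂ W) :
    ¬ (∀ f : ℕ → V ⊗[ℂ] W,
        (∀ ε : ℝ, 0 < ε → ∃ N : ℕ, ∀ m ≥ N, ∀ n ≥ N, osProjNorm osV osW (f m - f n) < ε) →
        ∃ u : V ⊗[ℂ] W, ∀ ε : ℝ, 0 < ε → ∃ N : ℕ, ∀ n ≥ N,
          osProjNorm osV osW (f n - u) < ε) := by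
  classical
  intro H
  obtain ⟨a, φ, ha1, hab⟩ := exists_biorth hV
  obtain ⟨b, ψ, hb1, hbb⟩ := exists_biorth hW
  set c : ℕ → ℂ := fun k => ((2:ℂ))⁻¹ ^ k with hc
  have hcnorm : ∀ k, ‖c k‖ = (2:ℝ)⁻¹ ^ k := by
    intro k
    rw [hc]
    rw [norm_pow, norm_inv]
    norm_num
  set f : ℕ → V ⊗[ℂ] W := fun n => ∑ k ∈ Finset.range n, c k • (a k ⊗ₜ[ℂ] b k) with hfdef
  have hdiff : ∀ n m : ℕ, n ≤ m → osProjNorm osV osW (f m - f n) ≤ 2 * (2:ℝ)⁻¹ ^ n := by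
    intro n m hnm
    have h1 : f m - f n = ∑ i : Fin (m - n), c (n + (i:ℕ)) • (a (n + (i:ℕ)) ⊗ₜ[ℂ] b (n + (i:ℕ))) := by
      rw [hfdef]
      rw [← Finset.sum_Ico_eq_sub (fun k => c k • (a k ⊗ₜ[ℂ] b k)) hnm]
      rw [Finset.sum_Ico_eq_sum_range]
      rw [Finset.sum_range]
    rw [h1]
    have h2 := osProjNorm_sum_le osV osW (fun i : Fin (m - n) => c (n + (i:ℕ)))
      (fun i => a (n + (i:ℕ))) (fun i => b (n + (i:ℕ))) 1 1 zero_le_one zero_le_one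
      (fun i => ha1 _) (fun i => hb1 _)
    rw [mul_one, mul_one] at h2
    refine le_trans h2 ?_
    have h3 : (∑ i : Fin (m - n), ‖c (n + (i:ℕ))‖) = (2:ℝ)⁻¹ ^ n *
        ∑ i ∈ Finset.range (m - n), (2:ℝ)⁻¹ ^ i := by
      rw [Finset.sum_range, Finset.mul_sum]
      refine Finset.sum_congr rfl fun i _ => ?_
      rw [hcnorm, pow_add]
    rw [h3]
    have h4 := geom_half_sum_le (m - n)
    have h5 : (0:ℝ) ≤ (2:ℝ)⁻¹ ^ n := by positivity
    calc (2:ℝ)⁻¹ ^ n * ∑ i ∈ Finset.range (m - n), (2:ℝ)⁻¹ ^ i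
        ≤ (2:ℝ)⁻¹ ^ n * 2 := mul_le_mul_of_nonneg_left h4 h5
      _ = 2 * (2:ℝ)⁻¹ ^ n := by ring
  have hcauchy : ∀ ε : ℝ, 0 < ε → ∃ N : ℕ, ∀ m ≥ N, ∀ n ≥ N,
      osProjNorm osV osW (f m - f n) < ε := by
    intro ε hε
    obtain ⟨N, hN⟩ := exists_pow_lt_of_lt_one (show (0:ℝ) < ε / 2 by positivity)
      (show (2:ℝ)⁻¹ < 1 by norm_num)
    refine ⟨N, fun m hm n hn => ?_⟩
    have key : ∀ n' m' : ℕ, N ≤ n' → n' ≤ m' → osProjNorm osV osW (f m' - f n') < ε := by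
      intro n' m' hNn hn'm'
      refine lt_of_le_of_lt (hdiff n' m' hn'm') ?_
      have h6 : (2:ℝ)⁻¹ ^ n' ≤ (2:ℝ)⁻¹ ^ N :=
        pow_le_pow_of_le_one (by norm_num) (by norm_num) hNn
      calc 2 * (2:ℝ)⁻¹ ^ n' ≤ 2 * (2:ℝ)⁻¹ ^ N := by linarith
        _ < 2 * (ε / 2) := by linarith
        _ = ε := by ring
    rcases le_total n m with hle | hle
    · exact key n m hn hle
    · rw [show f m - f n = -(f n - f m) by abel, osProjNorm_neg]
      exact key m n hm hle
  obtain ⟨u, hu⟩ := H f hcauchy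
  obtain ⟨s, hsu⟩ := TensorProduct.exists_finset u
  set r := s.card with hr
  set e := s.equivFin with he
  -- value of the pairing on partial sums
  have hpairf : ∀ (i j n : ℕ), i < n → j < n →
      pairing (φ i) (ψ j) (f n) = if i = j then c i else 0 := by
    intro i j n hi hj
    rw [hfdef]
    simp only [map_sum, map_smul, pairing_tmul, smul_eq_mul, hab, hbb]
    by_cases hij : i = j
    · subst hij
      rw [if_pos rfl, Finset.sum_eq_single_of_mem i (Finset.mem_range.mpr hi)]
      · simp
      · intro k _ hk
        simp [Ne.symm hk]
    · rw [if_neg hij]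
      refine Finset.sum_eq_zero fun k _ => ?_
      by_cases hik : i = k
      · subst hik
        have hjk : j ≠ i := Ne.symm hij
        simp [hjk]
      · simp [hik]
  -- value of the pairing on the limit
  have hlim : ∀ i j : Fin (r+1), pairing (φ (i:ℕ)) (ψ (j:ℕ)) u =
      if (i:ℕ) = (j:ℕ) then c (i:ℕ) else 0 := by
    intro i j
    set A : ℂ := if (i:ℕ) = (j:ℕ) then c (i:ℕ) else 0 with hA
    set K : ℝ := ‖φ (i:ℕ)‖ * ‖ψ (j:ℕ)‖ with hK
    have hK0 : (0:ℝ) ≤ K := by rw [hK]; positivity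
    have key : ∀ ε : ℝ, 0 < ε → ‖pairing (φ (i:ℕ)) (ψ (j:ℕ)) u - A‖ ≤ K * ε := by
      intro ε hε
      obtain ⟨N, hN⟩ := hu ε hε
      set n : ℕ := max N (max (i:ℕ) (j:ℕ)) + 1 with hn
      have hn1 : N ≤ n := by omega
      have hin : (i:ℕ) < n := by omega
      have hjn : (j:ℕ) < n := by omega
      have h1 := hN n hn1
      have h2 := pairing_le osV osW (φ (i:ℕ)) (ψ (j:ℕ)) (f n - u)
      rw [map_sub, hpairf (i:ℕ) (j:ℕ) n hin hjn, ← hA] at h2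
      rw [show A - pairing (φ (i:ℕ)) (ψ (j:ℕ)) u
          = -(pairing (φ (i:ℕ)) (ψ (j:ℕ)) u - A) by ring, norm_neg] at h2
      refine le_trans h2 ?_
      rw [← hK]
      exact mul_le_mul_of_nonneg_left (le_of_lt h1) hK0
    have := small_of_forall_le hK0 key
    have h7 : pairing (φ (i:ℕ)) (ψ (j:ℕ)) u = A := by
      have := sub_eq_zero.mp this
      exact this
    rw [h7]
  -- matrix factorization
  set P : Matrix (Fin (r+1)) (Fin r) ℂ :=
    Matrix.of fun i t => φ (i:ℕ) ((e.symm t : V × W).1) with hP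
  set Q : Matrix (Fin r) (Fin (r+1)) ℂ :=
    Matrix.of fun t j => ψ (j:ℕ) ((e.symm t : V × W).2) with hQ
  have hD : (Matrix.diagonal fun i : Fin (r+1) => c (i:ℕ)) = P * Q := by
    ext i j
    rw [Matrix.mul_apply, Matrix.diagonal_apply]
    have hform : (∑ t : Fin r, P i t * Q t j) = pairing (φ (i:ℕ)) (ψ (j:ℕ)) u := by
      rw [hsu, map_sum]
      have hstep : (∑ p ∈ s, pairing (φ (i:ℕ)) (ψ (j:ℕ)) (p.1 ⊗ₜ[ℂ] p.2))
          = ∑ x : {x // x ∈ s}, pairing (φ (i:ℕ)) (ψ (j:ℕ))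
              ((x : V × W).1 ⊗ₜ[ℂ] (x : V × W).2) :=
        (Finset.sum_coe_sort s fun p : V × W =>
          pairing (φ (i:ℕ)) (ψ (j:ℕ)) (p.1 ⊗ₜ[ℂ] p.2)).symm
      rw [hstep]
      rw [← Equiv.sum_comp e.symm (fun x : {x // x ∈ s} =>
        pairing (φ (i:ℕ)) (ψ (j:ℕ)) ((x : V × W).1 ⊗ₜ[ℂ] (x : V × W).2))]
      refine Finset.sum_congr rfl fun t _ => ?_
      rw [pairing_tmul, hP, hQ]
      rfl
    rw [hform, hlim i j]
    by_cases hij : i = j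
    · subst hij; simp
    · rw [if_neg hij, if_neg (fun hc : (i:ℕ) = (j:ℕ) => hij (Fin.ext hc))]
  have hunit : IsUnit (Matrix.diagonal fun i : Fin (r+1) => c (i:ℕ)) := by
    rw [Matrix.isUnit_iff_isUnit_det, Matrix.det_diagonal]
    rw [isUnit_iff_ne_zero]
    refine Finset.prod_ne_zero_iff.mpr fun i _ => ?_
    rw [hc]
    exact pow_ne_zero _ (by norm_num)
  have hrank1 : (Matrix.diagonal fun i : Fin (r+1) => c (i:ℕ)).rank = r + 1 := by
    rw [Matrix.rank_of_isUnit _ hunit, Fintype.card_fin]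
  have hrank2 : (P * Q).rank ≤ r := by
    refine le_trans (Matrix.rank_mul_le_left P Q) ?_
    refine le_trans (Matrix.rank_le_card_width P) ?_
    simp
  rw [hD] at hrank1
  omega

end OSAux
/- STATEMENT 0 -/
theorem osProjTensor_complete_iff_finiteDimensional
    (V W : Type) [NormedAddCommGroup V] [NormedSpace ℂ V] [CompleteSpace V]
    [NormedAddCommGroup W] [NormedSpace ℂ W] [CompleteSpace W]
    (osV : OperatorSpaceStructure V) (osW : OperatorSpaceStructure W) :
    (∀ f : ℕ → V ⊗[ℂ] W,
        (∀ ε : ℝ, 0 < ε → ∃ N : ℕ, ∀ m ≥ N, ∀ n ≥ N, osProjNorm osV osW (f m - f n) < ε) →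
        ∃ u : V ⊗[ℂ] W, ∀ ε : ℝ, 0 < ε → ∃ N : ℕ, ∀ n ≥ N, osProjNorm osV osW (f n - u) < ε) ↔
      (FiniteDimensional ℂ V ∨ FiniteDimensional ℂ W) := by
  constructor
  · intro H
    by_contra hcon
    push_neg at hcon
    exact OSAux.not_complete osV osW hcon.1 hcon.2 H
  · rintro (hV | hW) f hf
    · haveI := hV
      exact OSAux.complete_of_left osV osW f hf
    · haveI := hW
      exact OSAux.complete_of_right osV osW f hf
end

section
/- Let X be a Banach *-algebra having the Wiener property. Then X has spectral synthesis if and only if the map J ↦ Z_J = {P ∈ Prim(X) : P ⊉ J} is a one-one correspondence between the closed two-sided ideals of X and the τ_w-open subsets of Prim(X). -/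
open scoped TensorProduct


section SynthesisAux

variable {X : Type} [NonUnitalNormedRing X] [StarRing X] [NormedSpace ℂ X]

lemma StarRepOn.continuous_hom (ρ : StarRepOn X) : Continuous fun x => ρ.hom x :=
  AddMonoidHomClass.continuous_of_bound ρ.hom 1 fun x => by
    simpa using ρ.contractive x

lemma mem_of_primitive {P : Submodule ℂ X} {ρ : StarRepOn X}
    (hP : (P : Set X) = {x | ρ.hom x = 0}) (x : X) : x ∈ P ↔ ρ.hom x = 0 := by
  rw [← SetLike.mem_coe, hP]; exact Iff.rfl

lemma IsPrimitiveIdeal.isClosedIdeal {P : Submodule ℂ X} (h : IsPrimitiveIdeal X P) :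
    IsClosedIdeal X P := by
  obtain ⟨ρ, _, hP⟩ := h
  refine ⟨?_, fun x y hy => ?_, fun x y hy => ?_⟩
  · rw [hP]
    exact IsClosed.preimage ρ.continuous_hom isClosed_singleton
  · rw [mem_of_primitive hP] at hy ⊢
    rw [map_mul, hy, mul_zero]
  · rw [mem_of_primitive hP] at hy ⊢
    rw [map_mul, hy, zero_mul]

lemma IsPrimitiveIdeal.ne_top {P : Submodule ℂ X} (h : IsPrimitiveIdeal X P) : P ≠ ⊤ := by
  obtain ⟨ρ, ⟨⟨x, hx⟩, -⟩, hP⟩ := h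
  intro htop
  have hxP : x ∈ P := by rw [htop]; trivial
  exact hx ((mem_of_primitive hP x).mp hxP)

/-- Primitive ideals are prime. -/
lemma IsPrimitiveIdeal.prime {P J K : Submodule ℂ X} (h : IsPrimitiveIdeal X P)
    (hK : IsClosedIdeal X K) (hJK : ∀ x ∈ J, ∀ y ∈ K, x * y ∈ P) :
    J ≤ P ∨ K ≤ P := by
  obtain ⟨ρ, ⟨-, hirr⟩, hP⟩ := h
  by_cases hKP : K ≤ P
  · exact Or.inr hKP
  left
  set G : Set ρ.carrier := {w | ∃ y ∈ K, ∃ v, w = ρ.hom y v} with hG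
  set U : Submodule ℂ ρ.carrier := (Submodule.span ℂ G).topologicalClosure with hU
  have hUcl : IsClosed (U : Set ρ.carrier) := Submodule.isClosed_topologicalClosure _
  have hUinv : ∀ x : X, ∀ w ∈ U, ρ.hom x w ∈ U := by
    intro x
    have hcomap : IsClosed
        ((Submodule.comap ((ρ.hom x : ρ.carrier →ₗ[ℂ] ρ.carrier)) U : Submodule ℂ ρ.carrier) :
          Set ρ.carrier) := by
      rw [Submodule.comap_coe]
      exact hUcl.preimage (ρ.hom x).continuous
    have hle : U ≤ Submodule.comap ((ρ.hom x : ρ.carrier →ₗ[ℂ] ρ.carrier)) U := by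
      apply Submodule.topologicalClosure_minimal
      · apply Submodule.span_le.mpr
        rintro w ⟨y, hy, v, rfl⟩
        rw [SetLike.mem_coe, Submodule.mem_comap]
        have he : (ρ.hom x : ρ.carrier →ₗ[ℂ] ρ.carrier) (ρ.hom y v) = ρ.hom (x * y) v := by
          show ρ.hom x (ρ.hom y v) = _
          rw [map_mul, ContinuousLinearMap.mul_apply]
        rw [he]
        exact Submodule.le_topologicalClosure _
          (Submodule.subset_span ⟨x * y, hK.2.1 x y hy, v, rfl⟩)
      · exact hcomap
    intro w hw
    exact Submodule.mem_comap.mp (hle hw)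
  rcases hirr U hUcl hUinv with hbot | htop
  · exfalso
    apply hKP
    intro y hy
    rw [mem_of_primitive hP]
    ext v
    have hv : ρ.hom y v ∈ U :=
      Submodule.le_topologicalClosure _ (Submodule.subset_span ⟨y, hy, v, rfl⟩)
    rw [hbot] at hv
    simp only [Submodule.mem_bot] at hv
    simp [hv]
  · intro x hx
    rw [mem_of_primitive hP]
    have hker : U ≤ LinearMap.ker (ρ.hom x : ρ.carrier →ₗ[ℂ] ρ.carrier) := by
      apply Submodule.topologicalClosure_minimal
      · apply Submodule.span_le.mpr
        rintro w ⟨y, hy, v, rfl⟩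
        rw [SetLike.mem_coe, LinearMap.mem_ker]
        show ρ.hom x (ρ.hom y v) = 0
        have hxy : ρ.hom (x * y) = 0 := (mem_of_primitive hP _).mp (hJK x hx y hy)
        rw [← ContinuousLinearMap.mul_apply, ← map_mul, hxy]
        rfl
      · exact ContinuousLinearMap.isClosed_ker (ρ.hom x)
    ext v
    have hv : v ∈ U := by rw [htop]; trivial
    have := LinearMap.mem_ker.mp (hker hv)
    simpa using this

variable [IsScalarTower ℂ X X] [SMulCommClass ℂ X X]

lemma closedIdeal_closure {S : Submodule ℂ X}
    (hl : ∀ x : X, ∀ y ∈ S, x * y ∈ S) (hr : ∀ x : X, ∀ y ∈ S, y * x ∈ S) :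
    IsClosedIdeal X S.topologicalClosure := by
  have hcoeL : ∀ x : X, ⇑(LinearMap.mulLeft ℂ x) = fun y => x * y := fun x => rfl
  have hcoeR : ∀ x : X, ⇑(LinearMap.mulRight ℂ x) = fun y => y * x := fun x => rfl
  refine ⟨Submodule.isClosed_topologicalClosure _, fun x y hy => ?_, fun x y hy => ?_⟩
  · have hle : S.topologicalClosure ≤
        Submodule.comap (LinearMap.mulLeft ℂ x) S.topologicalClosure := by
      apply Submodule.topologicalClosure_minimal
      · intro z hz
        exact Submodule.mem_comap.mpr (Submodule.le_topologicalClosure _ (hl x z hz))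
      · rw [Submodule.comap_coe, hcoeL]
        exact (Submodule.isClosed_topologicalClosure S).preimage (continuous_mul_left x)
    exact Submodule.mem_comap.mp (hle hy)
  · have hle : S.topologicalClosure ≤
        Submodule.comap (LinearMap.mulRight ℂ x) S.topologicalClosure := by
      apply Submodule.topologicalClosure_minimal
      · intro z hz
        exact Submodule.mem_comap.mpr (Submodule.le_topologicalClosure _ (hr x z hz))
      · rw [Submodule.comap_coe, hcoeR]
        exact (Submodule.isClosed_topologicalClosure S).preimage (continuous_mul_right x)
    exact Submodule.mem_comap.mp (hle hy)

lemma mulIdeal_closedIdeal {J K : Submodule ℂ X}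
    (hJ : IsClosedIdeal X J) (hK : IsClosedIdeal X K) :
    IsClosedIdeal X (mulIdeal X J K) := by
  apply closedIdeal_closure
  · intro x y hy
    have hle : Submodule.span ℂ {z : X | ∃ x ∈ J, ∃ y ∈ K, z = x * y} ≤
        Submodule.comap (LinearMap.mulLeft ℂ x)
          (Submodule.span ℂ {z : X | ∃ x ∈ J, ∃ y ∈ K, z = x * y}) := by
      apply Submodule.span_le.mpr
      rintro z ⟨a, ha, b, hb, rfl⟩
      exact Submodule.mem_comap.mpr
        (Submodule.subset_span ⟨x * a, hJ.2.1 x a ha, b, hb, (mul_assoc x a b).symm⟩)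
    exact Submodule.mem_comap.mp (hle hy)
  · intro x y hy
    have hle : Submodule.span ℂ {z : X | ∃ x ∈ J, ∃ y ∈ K, z = x * y} ≤
        Submodule.comap (LinearMap.mulRight ℂ x)
          (Submodule.span ℂ {z : X | ∃ x ∈ J, ∃ y ∈ K, z = x * y}) := by
      apply Submodule.span_le.mpr
      rintro z ⟨a, ha, b, hb, rfl⟩
      exact Submodule.mem_comap.mpr
        (Submodule.subset_span ⟨a, ha, b * x, hK.2.2 x b hb, mul_assoc a b x⟩)
    exact Submodule.mem_comap.mp (hle hy)

lemma sSup_closedIdeal_closure {T : Set (Submodule ℂ X)}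
    (hT : ∀ I ∈ T, IsClosedIdeal X I) :
    IsClosedIdeal X ((sSup T).topologicalClosure) := by
  apply closedIdeal_closure
  · intro x y hy
    have hle : sSup T ≤ Submodule.comap (LinearMap.mulLeft ℂ x) (sSup T) :=
      sSup_le fun I hI z hz =>
        Submodule.mem_comap.mpr (le_sSup hI ((hT I hI).2.1 x z hz))
    exact Submodule.mem_comap.mp (hle hy)
  · intro x y hy
    have hle : sSup T ≤ Submodule.comap (LinearMap.mulRight ℂ x) (sSup T) :=
      sSup_le fun I hI z hz =>
        Submodule.mem_comap.mpr (le_sSup hI ((hT I hI).2.2 x z hz))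
    exact Submodule.mem_comap.mp (hle hy)

lemma top_closedIdeal : IsClosedIdeal X (⊤ : Submodule ℂ X) :=
  ⟨by rw [Submodule.top_coe]; exact isClosed_univ, fun _ _ _ => trivial, fun _ _ _ => trivial⟩

lemma kernelOf_closedIdeal {E : Set (Submodule ℂ X)}
    (hE : ∀ P ∈ E, IsPrimitiveIdeal X P) : IsClosedIdeal X (kernelOf X E) := by
  refine ⟨?_, fun x y hy => ?_, fun x y hy => ?_⟩
  · show IsClosed ((sInf E : Submodule ℂ X) : Set X)
    rw [Submodule.coe_sInf]
    exact isClosed_biInter fun P hP => ((hE P hP).isClosedIdeal).1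
  · exact Submodule.mem_sInf.mpr fun P hP =>
      ((hE P hP).isClosedIdeal).2.1 x y (Submodule.mem_sInf.mp hy P hP)
  · exact Submodule.mem_sInf.mpr fun P hP =>
      ((hE P hP).isClosedIdeal).2.2 x y (Submodule.mem_sInf.mp hy P hP)

lemma mulIdeal_le_prim_iff {P J K : Submodule ℂ X} (hP : IsPrimitiveIdeal X P)
    (hJ : IsClosedIdeal X J) (hK : IsClosedIdeal X K) :
    mulIdeal X J K ≤ P ↔ (J ≤ P ∨ K ≤ P) := by
  constructor
  · intro h
    refine hP.prime hK fun x hx y hy => h ?_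
    exact Submodule.le_topologicalClosure _ (Submodule.subset_span ⟨x, hx, y, hy, rfl⟩)
  · intro h
    apply Submodule.topologicalClosure_minimal
    · apply Submodule.span_le.mpr
      rintro z ⟨x, hx, y, hy, rfl⟩
      rcases h with h | h
      · exact SetLike.mem_coe.mpr ((hP.isClosedIdeal).2.2 y x (h hx))
      · exact SetLike.mem_coe.mpr ((hP.isClosedIdeal).2.1 x y (h hy))
    · exact (hP.isClosedIdeal).1

end SynthesisAux

/- STATEMENT 6 -/
theorem hasSpectralSynthesis_iff_bijective_correspondence
    (X : Type) [NonUnitalNormedRing X] [StarRing X] [NormedSpace ℂ X] [CompleteSpace X]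
    [IsScalarTower ℂ X X] [SMulCommClass ℂ X X] [StarModule ℂ X] [NormedStarGroup X]
    (hW : WienerProperty X) :
    letI : TopologicalSpace (Submodule ℂ X) := tauW X
    (HasSpectralSynthesis X ↔
      (Function.Injective fun J : {J : Submodule ℂ X // IsClosedIdeal X J} =>
          ({P | ¬ J.1 ≤ P.1} : Set {P : Submodule ℂ X // IsPrimitiveIdeal X P})) ∧
        (∀ J : {J : Submodule ℂ X // IsClosedIdeal X J},
          IsOpen ({P | ¬ J.1 ≤ P.1} : Set {P : Submodule ℂ X // IsPrimitiveIdeal X P})) ∧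
        (∀ U : Set {P : Submodule ℂ X // IsPrimitiveIdeal X P}, IsOpen U →
          ∃ J : {J : Submodule ℂ X // IsClosedIdeal X J}, U = {P | ¬ J.1 ≤ P.1})) := by
  classical
  letI : TopologicalSpace (Submodule ℂ X) := tauW X
  constructor
  · intro hSS
    refine ⟨?_, ?_, ?_⟩
    · -- injectivity
      rintro ⟨J, hJ⟩ ⟨K, hK⟩ hZ
      simp only at hZ
      have hiff : ∀ P : Submodule ℂ X, IsPrimitiveIdeal X P → (J ≤ P ↔ K ≤ P) := by
        intro P hP
        have h := Set.ext_iff.mp hZ ⟨P, hP⟩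
        simp only [Set.mem_setOf_eq] at h
        exact not_iff_not.mp h
      have hhullK : hullOf X (K : Set X) = hullOf X (J : Set X) := by
        ext Q
        constructor
        · rintro ⟨hQ, hsub⟩
          exact ⟨hQ, SetLike.coe_subset_coe.mpr
            ((hiff Q hQ).mpr (SetLike.coe_subset_coe.mp hsub))⟩
        · rintro ⟨hQ, hsub⟩
          exact ⟨hQ, SetLike.coe_subset_coe.mpr
            ((hiff Q hQ).mp (SetLike.coe_subset_coe.mp hsub))⟩
      set E := hullOf X (J : Set X) with hEdef
      have hEclosed : IsHkClosed X E := by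
        refine ⟨fun P hP => hP.1, ?_⟩
        apply Set.Subset.antisymm
        · rintro Q ⟨hQ, hsub⟩
          exact ⟨hQ, fun x hx => hsub (Submodule.mem_sInf.mpr fun P hP => hP.2 hx)⟩
        · rintro Q ⟨hQ, hsub⟩
          exact ⟨hQ, fun x hx => Submodule.mem_sInf.mp hx Q ⟨hQ, hsub⟩⟩
      have h1 : J = kernelOf X E := hSS E hEclosed J hJ hEdef.symm
      have h2 : K = kernelOf X E := hSS E hEclosed K hK hhullK
      exact Subtype.ext (h1.trans h2.symm)
    · -- openness
      intro J
      have hV : TopologicalSpace.GenerateOpen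
          {S : Set (Submodule ℂ X) | ∃ J : Submodule ℂ X,
            IsClosedIdeal X J ∧ S = {I | ¬ J ≤ I}}
          {I : Submodule ℂ X | ¬ J.1 ≤ I} :=
        TopologicalSpace.GenerateOpen.basic _ ⟨J.1, J.2, rfl⟩
      have hV' : IsOpen {I : Submodule ℂ X | ¬ J.1 ≤ I} := hV
      exact hV'.preimage continuous_subtype_val
    · -- surjectivity
      intro U hU
      obtain ⟨V, hVopen, hVU⟩ := isOpen_induced_iff.mp hU
      have hgen : TopologicalSpace.GenerateOpen
          {S : Set (Submodule ℂ X) | ∃ J : Submodule ℂ X,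
            IsClosedIdeal X J ∧ S = {I | ¬ J ≤ I}} V := hVopen
      subst hVU
      clear hU hVopen
      induction hgen with
      | basic S hS =>
        obtain ⟨J, hJcl, rfl⟩ := hS
        exact ⟨⟨J, hJcl⟩, rfl⟩
      | univ =>
        refine ⟨⟨⊤, top_closedIdeal⟩, ?_⟩
        ext P
        simp only [Set.mem_preimage, Set.mem_univ, Set.mem_setOf_eq, true_iff]
        exact fun hle => P.2.ne_top (top_le_iff.mp hle)
      | inter V₁ V₂ h₁ h₂ ih₁ ih₂ =>
        obtain ⟨⟨J₁, hJ₁⟩, hZ₁⟩ := ih₁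
        obtain ⟨⟨J₂, hJ₂⟩, hZ₂⟩ := ih₂
        refine ⟨⟨mulIdeal X J₁ J₂, mulIdeal_closedIdeal hJ₁ hJ₂⟩, ?_⟩
        ext P
        have e₁ : P.1 ∈ V₁ ↔ ¬ J₁ ≤ P.1 := by
          have h := Set.ext_iff.mp hZ₁ P
          simpa using h
        have e₂ : P.1 ∈ V₂ ↔ ¬ J₂ ≤ P.1 := by
          have h := Set.ext_iff.mp hZ₂ P
          simpa using h
        simp only [Set.mem_preimage, Set.mem_inter_iff, Set.mem_setOf_eq]
        rw [e₁, e₂, mulIdeal_le_prim_iff P.2 hJ₁ hJ₂]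
        exact not_or.symm
      | sUnion S hS ih =>
        choose f hf using ih
        refine ⟨⟨(sSup {I : Submodule ℂ X | ∃ s, ∃ h : s ∈ S, I = (f s h).1}).topologicalClosure,
          sSup_closedIdeal_closure (by rintro I ⟨s, h, rfl⟩; exact (f s h).2)⟩, ?_⟩
        ext P
        simp only [Set.mem_preimage, Set.mem_sUnion, Set.mem_setOf_eq]
        have key : (sSup {I : Submodule ℂ X | ∃ s, ∃ h : s ∈ S,
            I = (f s h).1}).topologicalClosure ≤ P.1 ↔
            ∀ s (h : s ∈ S), (f s h).1 ≤ P.1 := by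
          constructor
          · intro hle s h
            have hmem : (f s h).1 ∈
                {I : Submodule ℂ X | ∃ s, ∃ h : s ∈ S, I = (f s h).1} := ⟨s, h, rfl⟩
            exact le_trans (le_trans (le_sSup hmem)
              (Submodule.le_topologicalClosure _)) hle
          · intro hall
            exact Submodule.topologicalClosure_minimal _
              (sSup_le (by rintro I ⟨s, h, rfl⟩; exact hall s h)) (P.2.isClosedIdeal).1
        constructor
        · rintro ⟨s, hs, hPs⟩ hle
          have hmem : P ∈ Subtype.val ⁻¹' s := hPs
          rw [hf s hs] at hmem
          exact hmem (key.mp hle s hs)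
        · intro h
          by_contra hc
          push_neg at hc
          apply h
          apply key.mpr
          intro s hs
          by_contra hnle
          have hmem : P ∈ {Q : {P : Submodule ℂ X // IsPrimitiveIdeal X P} |
              ¬ (f s hs).1 ≤ Q.1} := hnle
          rw [← hf s hs] at hmem
          exact hc s hs hmem
  · rintro ⟨hinj, -, -⟩
    intro E hE J hJ hhull
    have hKcl : IsClosedIdeal X (kernelOf X E) := kernelOf_closedIdeal hE.1
    have h1 : ∀ P : Submodule ℂ X, IsPrimitiveIdeal X P → (J ≤ P ↔ P ∈ E) := by
      intro P hP
      constructor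
      · intro h
        rw [← hhull]
        exact ⟨hP, SetLike.coe_subset_coe.mpr h⟩
      · intro h
        rw [← hhull] at h
        exact SetLike.coe_subset_coe.mp h.2
    have h2 : ∀ P : Submodule ℂ X, IsPrimitiveIdeal X P → (kernelOf X E ≤ P ↔ P ∈ E) := by
      intro P hP
      constructor
      · intro h
        rw [← hE.2]
        exact ⟨hP, SetLike.coe_subset_coe.mpr h⟩
      · intro h
        rw [← hE.2] at h
        exact SetLike.coe_subset_coe.mp h.2
    have hZ : ({P | ¬ J ≤ P.1} : Set {P : Submodule ℂ X // IsPrimitiveIdeal X P}) =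
        {P | ¬ kernelOf X E ≤ P.1} := by
      ext P
      exact not_congr ((h1 P.1 P.2).trans (h2 P.1 P.2).symm)
    have heq : (⟨J, hJ⟩ : {J : Submodule ℂ X // IsClosedIdeal X J}) = ⟨kernelOf X E, hKcl⟩ :=
      hinj hZ
    exact congrArg Subtype.val heq
end

section
/- Let X be a Banach *-algebra with the Wiener property, and let J be a closed *-ideal of X that has a bounded approximate identity and the Wiener property. If J and X/J both have spectral synthesis (as Banach *-algebras), then X has spectral synthesis. -/
open scoped TensorProduct

section SS7Aux

variable {W : Type} [NonUnitalNormedRing W] [StarRing W] [NormedSpace ℂ W]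

/-- Membership in a primitive ideal in terms of the representation. -/
lemma SS7.prim_mem {P : Submodule ℂ W} (ρ : StarRepOn W)
    (hker : (P : Set W) = {x | ρ.hom x = 0}) (x : W) : x ∈ P ↔ ρ.hom x = 0 := by
  constructor
  · intro hx; have : x ∈ (P : Set W) := hx
    rwa [hker] at this
  · intro hx; show x ∈ (P : Set W); rw [hker]; exact hx

lemma SS7.rep_continuous (ρ : StarRepOn W) : Continuous (fun x : W => ρ.hom x) :=
  AddMonoidHomClass.continuous_of_bound ρ.hom 1 (fun x => by simpa using ρ.contractive x)

/-- Primitive ideals are closed two-sided ideals. -/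
lemma SS7.isClosedIdeal_of_primitive {P : Submodule ℂ W} (hP : IsPrimitiveIdeal W P) :
    IsClosedIdeal W P := by
  obtain ⟨ρ, _, hker⟩ := hP
  refine ⟨?_, ?_, ?_⟩
  · have : (P : Set W) = (fun x : W => ρ.hom x) ⁻¹' {0} := by
      rw [hker]; rfl
    rw [this]
    exact IsClosed.preimage (SS7.rep_continuous ρ) isClosed_singleton
  · intro x y hy
    rw [SS7.prim_mem ρ hker] at hy ⊢
    rw [map_mul, hy, mul_zero]
  · intro x y hy
    rw [SS7.prim_mem ρ hker] at hy ⊢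
    rw [map_mul, hy, zero_mul]

/-- The kernel of a set of primitive ideals is a closed two-sided ideal. -/
lemma SS7.isClosedIdeal_kernelOf {E : Set (Submodule ℂ W)}
    (hE : ∀ P ∈ E, IsPrimitiveIdeal W P) : IsClosedIdeal W (kernelOf W E) := by
  refine ⟨?_, ?_, ?_⟩
  · have : ((kernelOf W E : Submodule ℂ W) : Set W) = ⋂ p ∈ E, (p : Set W) :=
      Submodule.coe_sInf E
    rw [this]
    exact isClosed_biInter (fun P hP => (SS7.isClosedIdeal_of_primitive (hE P hP)).1)
  · intro x y hy
    rw [kernelOf, Submodule.mem_sInf] at hy ⊢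
    exact fun P hP => (SS7.isClosedIdeal_of_primitive (hE P hP)).2.1 x y (hy P hP)
  · intro x y hy
    rw [kernelOf, Submodule.mem_sInf] at hy ⊢
    exact fun P hP => (SS7.isClosedIdeal_of_primitive (hE P hP)).2.2 x y (hy P hP)

lemma SS7.subset_kernelOf_hullOf (M : Set W) : M ⊆ ((kernelOf W (hullOf W M) : Submodule ℂ W) : Set W) := by
  intro x hx
  show x ∈ kernelOf W (hullOf W M)
  rw [kernelOf, Submodule.mem_sInf]
  exact fun P hP => hP.2 hx

/-- Hulls are always hull-kernel closed. -/
lemma SS7.isHkClosed_hullOf (M : Set W) : IsHkClosed W (hullOf W M) := by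
  constructor
  · exact fun P hP => hP.1
  · apply Set.Subset.antisymm
    · rintro P ⟨hPprim, hPker⟩
      exact ⟨hPprim, (SS7.subset_kernelOf_hullOf M).trans hPker⟩
    · rintro P ⟨hPprim, hPM⟩
      refine ⟨hPprim, ?_⟩
      intro x hx
      have : kernelOf W (hullOf W M) ≤ P := sInf_le ⟨hPprim, hPM⟩
      exact this hx

/-- Iterated squaring, a substitute for `x ^ (2 ^ n)` in non-unital rings. -/
def SS7.pow2 {R : Type} [Mul R] : ℕ → R → R
  | 0, b => b
  | n + 1, b => SS7.pow2 n b * SS7.pow2 n b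

lemma SS7.norm_pow2_le {R : Type} [NonUnitalSeminormedRing R] (b : R) :
    ∀ n : ℕ, ‖SS7.pow2 n b‖ ≤ ‖b‖ ^ (2 ^ n)
  | 0 => by simp [SS7.pow2]
  | n + 1 => by
    have h := SS7.norm_pow2_le b n
    calc ‖SS7.pow2 (n+1) b‖ ≤ ‖SS7.pow2 n b‖ * ‖SS7.pow2 n b‖ := norm_mul_le _ _
      _ ≤ ‖b‖ ^ (2 ^ n) * ‖b‖ ^ (2 ^ n) := by
          exact mul_le_mul h h (norm_nonneg _) (le_trans (norm_nonneg _) h)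
      _ = ‖b‖ ^ (2 ^ (n+1)) := by rw [← pow_add]; ring_nf

lemma SS7.pow2_selfAdjoint {R : Type} [NonUnitalSemiring R] [StarRing R] {b : R}
    (hb : star b = b) : ∀ n : ℕ, star (SS7.pow2 n b) = SS7.pow2 n b
  | 0 => hb
  | n + 1 => by
    show star (SS7.pow2 n b * SS7.pow2 n b) = _
    rw [star_mul, SS7.pow2_selfAdjoint hb n]; rfl

lemma SS7.norm_pow2_selfAdjoint {R : Type} [NonUnitalNormedRing R] [StarRing R] [CStarRing R]
    {b : R} (hb : star b = b) : ∀ n : ℕ, ‖SS7.pow2 n b‖ = ‖b‖ ^ (2 ^ n)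
  | 0 => by simp [SS7.pow2]
  | n + 1 => by
    have h := SS7.norm_pow2_selfAdjoint hb n
    calc ‖SS7.pow2 (n+1) b‖ = ‖star (SS7.pow2 n b) * SS7.pow2 n b‖ := by
          rw [SS7.pow2_selfAdjoint hb n]; rfl
      _ = ‖SS7.pow2 n b‖ * ‖SS7.pow2 n b‖ := CStarRing.norm_star_mul_self
      _ = ‖b‖ ^ (2 ^ (n+1)) := by rw [h, ← pow_add]; ring_nf

/-- If `a ^ (2 ^ n) ≤ C * B ^ (2 ^ n)` for all `n`, then `a ≤ B`. -/
lemma SS7.le_of_pow2_le {a B C : ℝ} (ha : 0 ≤ a) (hB : 0 ≤ B) (hC : 0 ≤ C)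
    (h : ∀ n : ℕ, a ^ (2 ^ n) ≤ C * B ^ (2 ^ n)) : a ≤ B := by
  by_contra hab
  push_neg at hab
  rcases eq_or_lt_of_le hB with hB0 | hB0
  · have h0 := h 1
    rw [← hB0] at h0
    simp at h0
    nlinarith [h 1, pow_pos (lt_of_le_of_lt hB hab) 2]
  · have hr : 1 < a / B := (one_lt_div hB0).mpr hab
    obtain ⟨n, hn⟩ := (tendsto_pow_atTop_atTop_of_one_lt hr).eventually_ge_atTop (C + 1) |>.exists
    have hle : (a / B) ^ (2 ^ n) ≤ C := by
      rw [div_pow, div_le_iff₀ (pow_pos hB0 _)]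
      exact h (n)
    have : (a / B) ^ n ≤ (a / B) ^ (2 ^ n) :=
      pow_le_pow_right₀ (le_of_lt hr) (Nat.le_of_lt (Nat.lt_two_pow_self (n := n)))
    linarith

end SS7Aux

set_option maxHeartbeats 2000000 in
/-- The key extension lemma: an irreducible representation of the ideal `J ≅ Y`
annihilating (the trace of) a closed ideal `I` extends to an irreducible
representation of `X` annihilating `I`. -/
lemma SS7.extend_primitive
    (X : Type) [NonUnitalNormedRing X] [StarRing X] [NormedSpace ℂ X]
    [IsScalarTower ℂ X X] [SMulCommClass ℂ X X] [StarModule ℂ X] [NormedStarGroup X]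
    (J : Submodule ℂ X) (hJ : IsClosedIdeal X J) (hJstar : IsStarIdeal X J)
    (hbai : HasBoundedApproxIdentity X J)
    (Y : Type) [NonUnitalNormedRing Y] [StarRing Y] [NormedSpace ℂ Y]
    (mY : SubalgebraModel X J Y)
    (I : Submodule ℂ X) (hI : IsClosedIdeal X I)
    (Q : Submodule ℂ Y) (hQ : IsPrimitiveIdeal Y Q)
    (hIQ : ∀ y : Y, mY.incl y ∈ I → y ∈ Q) :
    ∃ P : Submodule ℂ X, IsPrimitiveIdeal X P ∧ I ≤ P ∧
      ∀ y : Y, mY.incl y ∈ P → y ∈ Q := by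
  classical
  obtain ⟨ρ, hirr, hker⟩ := hQ
  have hmemQ := SS7.prim_mem ρ hker
  set H := ρ.carrier with hH
  haveI : Nonempty H := ⟨0⟩
  haveI : Nonempty Y := ⟨0⟩
  obtain ⟨ι, l, e, C, hl, he, hlim⟩ := hbai
  haveI := hl
  haveI : Nonempty ι := Filter.nonempty_of_neBot l
  set incl := mY.incl with hincl
  have hiso : ∀ y, ‖incl y‖ = ‖y‖ := mY.isometric
  have hinj : Function.Injective incl := by
    intro a b hab
    have h : ‖a - b‖ = 0 := by rw [← hiso, map_sub, hab, sub_self, norm_zero]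
    rwa [norm_eq_zero, sub_eq_zero] at h
  have hinclJ : ∀ y, incl y ∈ J := by
    intro y
    have : incl y ∈ Set.range incl := ⟨y, rfl⟩
    rw [mY.range_eq] at this
    exact this
  set v : X → Y := Function.invFun incl with hv
  have hvj : ∀ {x : X}, x ∈ J → incl (v x) = x := by
    intro x hx
    apply Function.invFun_eq (f := incl)
    have : x ∈ Set.range incl := by rw [mY.range_eq]; exact hx
    exact this
  have hJmul : ∀ (x : X) {j : X}, j ∈ J → x * j ∈ J := fun x {j} hj => hJ.2.1 x j hj
  have heJ : ∀ m, e m ∈ J := fun m => (he m).1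
  have heC : ∀ m, ‖e m‖ ≤ C := fun m => (he m).2
  have hC0 : 0 ≤ C := le_trans (norm_nonneg _) (heC (Classical.arbitrary ι))
  -- algebraic properties of v on J
  have hvadd : ∀ {x x' : X}, x ∈ J → x' ∈ J → v (x + x') = v x + v x' := by
    intro x x' hx hx'
    apply hinj
    rw [map_add, hvj hx, hvj hx', hvj (J.add_mem hx hx')]
  have hvsub : ∀ {x x' : X}, x ∈ J → x' ∈ J → v (x - x') = v x - v x' := by
    intro x x' hx hx'
    apply hinj
    rw [map_sub, hvj hx, hvj hx', hvj (J.sub_mem hx hx')]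
  have hvsmul : ∀ (c : ℂ) {x : X}, x ∈ J → v (c • x) = c • v x := by
    intro c x hx
    apply hinj
    rw [map_smul, hvj hx, hvj (J.smul_mem c hx)]
  have hvnorm : ∀ {x : X}, x ∈ J → ‖v x‖ = ‖x‖ := by
    intro x hx; rw [← hiso, hvj hx]
  set σ : X → (H →L[ℂ] H) := fun x => ρ.hom (v x) with hσ
  have hσnorm : ∀ {x : X}, x ∈ J → ‖σ x‖ ≤ ‖x‖ := by
    intro x hx
    exact (ρ.contractive _).trans (le_of_eq (hvnorm hx))
  have hσadd : ∀ {x x' : X}, x ∈ J → x' ∈ J → σ (x + x') = σ x + σ x' := by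
    intro x x' hx hx'
    show ρ.hom (v (x + x')) = _
    rw [hvadd hx hx', map_add]
  have hσsub : ∀ {x x' : X}, x ∈ J → x' ∈ J → σ (x - x') = σ x - σ x' := by
    intro x x' hx hx'
    show ρ.hom (v (x - x')) = _
    rw [hvsub hx hx', map_sub]
  have hσρ : ∀ {j : X}, j ∈ J → ∀ (y : Y), σ j * ρ.hom y = σ (j * incl y) := by
    intro j hj y
    show ρ.hom (v j) * ρ.hom y = ρ.hom (v (j * incl y))
    rw [← map_mul]
    congr 1
    apply hinj
    rw [map_mul, hvj hj, hvj (hJmul j (hinclJ y))]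
  -- the dense invariant subspace
  set G : Set H := {w : H | ∃ (y : Y) (ξ : H), ρ.hom y ξ = w} with hG
  have hGinv : ∀ (y : Y), ∀ w ∈ Submodule.span ℂ G, ρ.hom y w ∈ Submodule.span ℂ G := by
    intro y w hw
    refine Submodule.span_induction ?_ ?_ ?_ ?_ hw
    · rintro w ⟨y', ξ, rfl⟩
      apply Submodule.subset_span
      exact ⟨y * y', ξ, by rw [map_mul, ContinuousLinearMap.mul_apply]⟩
    · simp
    · intro w1 w2 _ _ h1 h2
      rw [map_add]
      exact Submodule.add_mem _ h1 h2
    · intro c w _ h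
      rw [map_smul]
      exact Submodule.smul_mem _ c h
  have hdense : Dense ((Submodule.span ℂ G : Submodule ℂ H) : Set H) := by
    have hinv : ∀ y : Y, ∀ w ∈ (Submodule.span ℂ G).topologicalClosure,
        ρ.hom y w ∈ (Submodule.span ℂ G).topologicalClosure := by
      intro y w hw
      have hmaps : Set.MapsTo (ρ.hom y) ((Submodule.span ℂ G : Submodule ℂ H) : Set H)
          ((Submodule.span ℂ G : Submodule ℂ H) : Set H) := fun u hu => hGinv y u hu
      have := hmaps.closure (ρ.hom y).continuous
      have hw' : w ∈ closure ((Submodule.span ℂ G : Submodule ℂ H) : Set H) := by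
        rwa [← Submodule.topologicalClosure_coe]
      have := this hw'
      rwa [← Submodule.topologicalClosure_coe] at this
    rcases hirr.2 (Submodule.span ℂ G).topologicalClosure
        (Submodule.isClosed_topologicalClosure _) hinv with hbot | htop
    · exfalso
      obtain ⟨y0, hy0⟩ := hirr.1
      apply hy0
      ext ξ
      have h1 : ρ.hom y0 ξ ∈ Submodule.span ℂ G := Submodule.subset_span ⟨y0, ξ, rfl⟩
      have h2 : ρ.hom y0 ξ ∈ (Submodule.span ℂ G).topologicalClosure :=
        Submodule.le_topologicalClosure _ h1
      rw [hbot] at h2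
      simpa using h2
    · rw [dense_iff_closure_eq, ← Submodule.topologicalClosure_coe, htop]
      rfl
  -- the approximating operators
  set F : X → ι → (H →L[ℂ] H) := fun x m => σ (x * e m) with hF
  have hxeJ : ∀ x m, x * e m ∈ J := fun x m => hJmul x (heJ m)
  have hFnorm : ∀ x m, ‖F x m‖ ≤ C * ‖x‖ := by
    intro x m
    refine (hσnorm (hxeJ x m)).trans ?_
    calc ‖x * e m‖ ≤ ‖x‖ * ‖e m‖ := norm_mul_le _ _
      _ ≤ ‖x‖ * C := mul_le_mul_of_nonneg_left (heC m) (norm_nonneg _)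
      _ = C * ‖x‖ := mul_comm _ _
  have hgen : ∀ (x : X) (y : Y) (ξ : H),
      Filter.Tendsto (fun m => F x m (ρ.hom y ξ)) l (nhds (σ (x * incl y) ξ)) := by
    intro x y ξ
    rw [← tendsto_sub_nhds_zero_iff]
    apply squeeze_zero_norm (a := fun m => ‖x‖ * ‖e m * incl y - incl y‖ * ‖ξ‖)
    · intro m
      have h1 : F x m (ρ.hom y ξ) = σ (x * (e m * incl y)) ξ := by
        show (σ (x * e m)) (ρ.hom y ξ) = _
        rw [← ContinuousLinearMap.mul_apply, hσρ (hxeJ x m) y, mul_assoc]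
      have hmem1 : x * (e m * incl y) ∈ J := hJmul x (hJmul (e m) (hinclJ y))
      have hmem2 : x * incl y ∈ J := hJmul x (hinclJ y)
      rw [h1, ← ContinuousLinearMap.sub_apply, ← hσsub hmem1 hmem2]
      calc ‖σ (x * (e m * incl y) - x * incl y) ξ‖
          ≤ ‖σ (x * (e m * incl y) - x * incl y)‖ * ‖ξ‖ :=
            ContinuousLinearMap.le_opNorm _ _
        _ ≤ ‖x * (e m * incl y) - x * incl y‖ * ‖ξ‖ := by
            gcongr
            exact hσnorm (J.sub_mem hmem1 hmem2)
        _ = ‖x * (e m * incl y - incl y)‖ * ‖ξ‖ := by rw [mul_sub]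
        _ ≤ ‖x‖ * ‖e m * incl y - incl y‖ * ‖ξ‖ := by
            gcongr
            exact norm_mul_le _ _
    · have h2 : Filter.Tendsto (fun m => e m * incl y) l (nhds (incl y)) :=
        (hlim _ (hinclJ y)).1
      rw [← tendsto_sub_nhds_zero_iff] at h2
      have h3 : Filter.Tendsto (fun m => ‖e m * incl y - incl y‖) l (nhds 0) := by
        simpa using h2.norm
      have h4 := (h3.const_mul (‖x‖)).mul_const (‖ξ‖)
      simpa using h4
  have hspan : ∀ (x : X), ∀ w ∈ Submodule.span ℂ G,
      ∃ w', Filter.Tendsto (fun m => F x m w) l (nhds w') := by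
    intro x w hw
    refine Submodule.span_induction ?_ ?_ ?_ ?_ hw
    · rintro w ⟨y, ξ, rfl⟩
      exact ⟨σ (x * incl y) ξ, hgen x y ξ⟩
    · exact ⟨0, by simpa using tendsto_const_nhds⟩
    · rintro w1 w2 _ _ ⟨u1, h1⟩ ⟨u2, h2⟩
      exact ⟨u1 + u2, by simpa [map_add] using h1.add h2⟩
    · rintro c w _ ⟨u, h⟩
      exact ⟨c • u, by simpa [map_smul] using h.const_smul c⟩
  have hcauchy : ∀ (x : X) (η : H), Cauchy (Filter.map (fun m => F x m η) l) := by
    intro x η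
    rw [Metric.cauchy_iff]
    refine ⟨Filter.NeBot.map hl _, ?_⟩
    intro ε hε
    have hKpos : (0:ℝ) < C * ‖x‖ + 1 := by positivity
    set δ := ε / (4 * (C * ‖x‖ + 1)) with hδ
    have hδpos : 0 < δ := by positivity
    obtain ⟨w, hwmem, hwdist⟩ := Metric.mem_closure_iff.mp (hdense η) δ hδpos
    obtain ⟨w', hw'⟩ := hspan x w hwmem
    have hs : ∀ᶠ m in l, dist (F x m w) w' < ε / 4 :=
      Metric.tendsto_nhds.mp hw' (ε / 4) (by positivity)
    refine ⟨(fun m => F x m η) '' {m | dist (F x m w) w' < ε / 4},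
      Filter.image_mem_map hs, ?_⟩
    rintro a ⟨m, hm, rfl⟩ b ⟨m', hm', rfl⟩
    show dist (F x m η) (F x m' η) < ε
    have key : ∀ k, dist (F x k η) (F x k w) ≤ ε / 4 := by
      intro k
      rw [dist_eq_norm, ← map_sub]
      calc ‖F x k (η - w)‖ ≤ ‖F x k‖ * ‖η - w‖ := ContinuousLinearMap.le_opNorm _ _
        _ ≤ (C * ‖x‖ + 1) * ‖η - w‖ := by
            gcongr
            exact (hFnorm x k).trans (by linarith)
        _ ≤ (C * ‖x‖ + 1) * δ := by
            gcongr
            rw [← dist_eq_norm]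
            exact le_of_lt hwdist
        _ = ε / 4 := by
            rw [hδ, mul_div_assoc']
            rw [div_eq_div_iff (by positivity) (by norm_num : (4:ℝ) ≠ 0)]
            ring
    have t1 := key m
    have t2 := key m'
    have h4 : dist (F x m η) (F x m' η) ≤ dist (F x m η) (F x m w) +
        dist (F x m w) (F x m' w) + dist (F x m' w) (F x m' η) :=
      dist_triangle4 _ _ _ _
    have t2' : dist (F x m' w) (F x m' η) ≤ ε / 4 := by rw [dist_comm]; exact t2
    have hm3 : dist (F x m w) (F x m' w) < ε / 4 + ε / 4 := by
      have h5 : dist (F x m w) (F x m' w) ≤ dist (F x m w) w' + dist w' (F x m' w) :=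
        dist_triangle _ _ _
      have h6 : dist w' (F x m' w) < ε / 4 := by rw [dist_comm]; exact hm'
      have h7 : dist (F x m w) w' < ε / 4 := hm
      linarith
    linarith
  set g : X → H → H := fun x η => Filter.limUnder l (fun m => F x m η) with hg
  have htend : ∀ x η, Filter.Tendsto (fun m => F x m η) l (nhds (g x η)) := by
    intro x η
    exact (hcauchy x η).le_nhds_lim
  have huniq : ∀ {x : X} {η w' : H},
      Filter.Tendsto (fun m => F x m η) l (nhds w') → g x η = w' :=
    fun h => tendsto_nhds_unique (htend _ _) h
  have hgadd : ∀ x η η', g x (η + η') = g x η + g x η' := by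
    intro x η η'
    exact huniq (by simpa [map_add] using (htend x η).add (htend x η'))
  have hgsmul : ∀ x (c : ℂ) η, g x (c • η) = c • g x η := by
    intro x c η
    exact huniq (by simpa [map_smul] using (htend x η).const_smul c)
  have hgnorm : ∀ x η, ‖g x η‖ ≤ C * ‖x‖ * ‖η‖ := by
    intro x η
    apply le_of_tendsto (htend x η).norm
    apply Filter.Eventually.of_forall
    intro m
    calc ‖F x m η‖ ≤ ‖F x m‖ * ‖η‖ := ContinuousLinearMap.le_opNorm _ _
      _ ≤ C * ‖x‖ * ‖η‖ := mul_le_mul_of_nonneg_right (hFnorm x m) (norm_nonneg _)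
  set T : X → (H →L[ℂ] H) := fun x => LinearMap.mkContinuous
    { toFun := g x, map_add' := hgadd x, map_smul' := hgsmul x } (C * ‖x‖) (hgnorm x)
    with hT
  have hTapply : ∀ x η, T x η = g x η := fun _ _ => rfl
  have hTnorm : ∀ x, ‖T x‖ ≤ C * ‖x‖ := fun x =>
    LinearMap.mkContinuous_norm_le _ (by positivity) _
  have hTeval : ∀ x y ξ, T x (ρ.hom y ξ) = σ (x * incl y) ξ := fun x y ξ =>
    huniq (hgen x y ξ)
  have hext : ∀ (A B : H →L[ℂ] H),
      (∀ (y : Y) (ξ : H), A (ρ.hom y ξ) = B (ρ.hom y ξ)) → A = B := by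
    intro A B h
    apply ContinuousLinearMap.ext_on hdense
    rintro w ⟨y, ξ, rfl⟩
    exact h y ξ
  have hTincl : ∀ y : Y, T (incl y) = ρ.hom y := by
    intro y
    apply hext
    intro y' ξ
    rw [hTeval]
    have h1 : incl y * incl y' = incl (y * y') := (map_mul incl y y').symm
    rw [h1]
    show ρ.hom (v (incl (y * y'))) ξ = _
    have h2 : v (incl (y * y')) = y * y' := hinj (by rw [hvj (hinclJ _)])
    rw [h2, map_mul, ContinuousLinearMap.mul_apply]
  have hTadd : ∀ x x', T (x + x') = T x + T x' := by
    intro x x'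
    ext η
    show g (x + x') η = g x η + g x' η
    apply huniq
    have hFa : ∀ m, F (x + x') m η = F x m η + F x' m η := by
      intro m
      show (σ ((x + x') * e m)) η = _
      rw [add_mul, hσadd (hxeJ x m) (hxeJ x' m)]
      rfl
    have := (htend x η).add (htend x' η)
    simpa [hFa] using this
  have hTsmul : ∀ (c : ℂ) x, T (c • x) = c • T x := by
    intro c x
    ext η
    show g (c • x) η = c • g x η
    apply huniq
    have hFa : ∀ m, F (c • x) m η = c • F x m η := by
      intro m
      show (σ ((c • x) * e m)) η = _
      rw [smul_mul_assoc]
      show ρ.hom (v (c • (x * e m))) η = _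
      rw [hvsmul c (hxeJ x m), map_smul]
      rfl
    have := (htend x η).const_smul c
    simpa [hFa] using this
  have hTzero : T 0 = 0 := by
    have h := hTadd 0 0
    rw [add_zero] at h
    exact left_eq_add.mp h
  have hTmul : ∀ x x', T (x * x') = T x * T x' := by
    intro x x'
    apply hext
    intro y ξ
    rw [ContinuousLinearMap.mul_apply, hTeval, hTeval]
    show σ ((x * x') * incl y) ξ = T x (ρ.hom (v (x' * incl y)) ξ)
    rw [hTeval, hvj (hJmul x' (hinclJ y)), mul_assoc]
  have adjH : ∀ (c : Y) (u w : H),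
      (inner ℂ (ρ.hom c u) w : ℂ) = inner ℂ u (ρ.hom (star c) w) := by
    intro c u w
    rw [map_star, ContinuousLinearMap.star_eq_adjoint,
      ContinuousLinearMap.adjoint_inner_right]
  have hstar_gen : ∀ x (y y' : Y) (ξ ξ' : H),
      (inner ℂ (T (star x) (ρ.hom y ξ)) (ρ.hom y' ξ') : ℂ) =
        inner ℂ (ρ.hom y ξ) (T x (ρ.hom y' ξ')) := by
    intro x y y' ξ ξ'
    rw [hTeval, hTeval]
    have hstara : star x * incl y ∈ J := hJmul _ (hinclJ y)
    have hstarb : x * incl y' ∈ J := hJmul _ (hinclJ y')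
    show (inner ℂ (ρ.hom (v (star x * incl y)) ξ) (ρ.hom y' ξ') : ℂ) =
      inner ℂ (ρ.hom y ξ) (ρ.hom (v (x * incl y')) ξ')
    rw [adjH, adjH y ξ]
    rw [← ContinuousLinearMap.mul_apply, ← map_mul, ← ContinuousLinearMap.mul_apply,
      ← map_mul]
    have hkey : star (v (star x * incl y)) * y' = star y * v (x * incl y') := by
      apply hinj
      rw [map_mul, map_mul, map_star, map_star, hvj hstara, hvj hstarb]
      rw [star_mul, star_star, mul_assoc]
    rw [hkey]
  have hTstar : ∀ x, T (star x) = star (T x) := by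
    intro x
    rw [ContinuousLinearMap.star_eq_adjoint]
    rw [ContinuousLinearMap.eq_adjoint_iff]
    have step1 : ∀ (y : Y) (ξ : H) (w : H),
        (inner ℂ (T (star x) (ρ.hom y ξ)) w : ℂ) = inner ℂ (ρ.hom y ξ) (T x w) := by
      intro y ξ
      have hc1 : Continuous (fun w : H => (inner ℂ (T (star x) (ρ.hom y ξ)) w : ℂ)) :=
        Continuous.inner continuous_const continuous_id
      have hc2 : Continuous fun w : H => (inner ℂ (ρ.hom y ξ) (T x w) : ℂ) :=
        Continuous.inner continuous_const (T x).continuous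
      have heq0 : ∀ w ∈ Submodule.span ℂ G,
          (inner ℂ (T (star x) (ρ.hom y ξ)) w : ℂ) = inner ℂ (ρ.hom y ξ) (T x w) := by
        intro w hw
        refine Submodule.span_induction ?_ ?_ ?_ ?_ hw
        · rintro w ⟨y', ξ', rfl⟩
          exact hstar_gen x y y' ξ ξ'
        · simp
        · intro w1 w2 _ _ h1 h2
          rw [map_add, inner_add_right, inner_add_right, h1, h2]
        · intro c w _ h
          rw [map_smul, inner_smul_right, inner_smul_right, h]
      have := Continuous.ext_on hdense hc1 hc2 (fun w hw => heq0 w hw)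
      intro w
      exact congrFun this w
    intro u w₂
    have hc1 : Continuous fun u : H => (inner ℂ (T (star x) u) w₂ : ℂ) :=
      Continuous.inner (T (star x)).continuous continuous_const
    have hc2 : Continuous fun u : H => (inner ℂ u (T x w₂) : ℂ) :=
      Continuous.inner continuous_id continuous_const
    have heq0 : ∀ u ∈ Submodule.span ℂ G,
        (inner ℂ (T (star x) u) w₂ : ℂ) = inner ℂ u (T x w₂) := by
      intro u hu
      refine Submodule.span_induction ?_ ?_ ?_ ?_ hu
      · rintro u ⟨y, ξ, rfl⟩
        exact step1 y ξ w₂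
      · simp
      · intro u1 u2 _ _ h1 h2
        rw [map_add, inner_add_left, inner_add_left, h1, h2]
      · intro c u _ h
        rw [map_smul, inner_smul_left, inner_smul_left, h]
    exact congrFun (Continuous.ext_on hdense hc1 hc2 (fun u hu => heq0 u hu)) u
  -- contractivity
  have hTpow2 : ∀ (b : X) (n : ℕ), T (SS7.pow2 n b) = SS7.pow2 n (T b) := by
    intro b n
    induction n with
    | zero => rfl
    | succ n ih =>
      show T (SS7.pow2 n b * SS7.pow2 n b) = _
      rw [hTmul, ih]
      rfl
  have hsa_le : ∀ b : X, star b = b → ‖T b‖ ≤ ‖b‖ := by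
    intro b hb
    have hTsa : star (T b) = T b := by rw [← hTstar, hb]
    apply SS7.le_of_pow2_le (norm_nonneg _) (norm_nonneg _) hC0
    intro n
    calc ‖T b‖ ^ (2 ^ n) = ‖SS7.pow2 n (T b)‖ := (SS7.norm_pow2_selfAdjoint hTsa n).symm
      _ = ‖T (SS7.pow2 n b)‖ := by rw [hTpow2]
      _ ≤ C * ‖SS7.pow2 n b‖ := hTnorm _
      _ ≤ C * ‖b‖ ^ (2 ^ n) := mul_le_mul_of_nonneg_left (SS7.norm_pow2_le b n) hC0
  have hcontr : ∀ x, ‖T x‖ ≤ ‖x‖ := by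
    intro x
    have h1 : ‖T x‖ * ‖T x‖ = ‖T (star x * x)‖ := by
      rw [hTmul, hTstar]
      exact (CStarRing.norm_star_mul_self (x := T x)).symm
    have hsa : star (star x * x) = star x * x := by rw [star_mul, star_star]
    have h2 : ‖T (star x * x)‖ ≤ ‖x‖ * ‖x‖ := by
      refine (hsa_le _ hsa).trans ?_
      calc ‖star x * x‖ ≤ ‖star x‖ * ‖x‖ := norm_mul_le _ _
        _ = ‖x‖ * ‖x‖ := by rw [norm_star]
    nlinarith [norm_nonneg (T x), norm_nonneg x, sq_nonneg (‖T x‖ - ‖x‖),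
      sq_nonneg (‖T x‖ + ‖x‖)]
  -- package the representation
  set Φ : X →⋆ₙₐ[ℂ] (H →L[ℂ] H) :=
    { toFun := T
      map_smul' := hTsmul
      map_zero' := hTzero
      map_add' := hTadd
      map_mul' := hTmul
      map_star' := hTstar } with hΦ
  set Prep : StarRepOn X := { carrier := H, hom := Φ, contractive := hcontr } with hPrep
  have hPrephom : ∀ x, Prep.hom x = T x := fun _ => rfl
  have hPirr : Prep.IsIrreducible := by
    constructor
    · obtain ⟨y0, hy0⟩ := hirr.1
      refine ⟨incl y0, ?_⟩
      show T (incl y0) ≠ 0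
      rw [hTincl]
      exact hy0
    · intro U hUc hUinv
      apply hirr.2 U hUc
      intro y w hw
      have h := hUinv (incl y) w hw
      rwa [show Prep.hom (incl y) = ρ.hom y from hTincl y] at h
  set ΦL : X →ₗ[ℂ] (H →L[ℂ] H) :=
    { toFun := T, map_add' := hTadd, map_smul' := fun c x => hTsmul c x } with hΦL
  set P : Submodule ℂ X := LinearMap.ker ΦL with hP
  have hPset : (P : Set X) = {x : X | Prep.hom x = 0} := by
    ext x
    simp [hP, LinearMap.mem_ker]
    rfl
  refine ⟨P, ⟨Prep, hPirr, hPset⟩, ?_, ?_⟩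
  · intro x hx
    show ΦL x = 0
    show T x = 0
    apply hext (T x) 0
    intro y ξ
    rw [hTeval]
    have hmemI : x * incl y ∈ I := hI.2.2 (incl y) x hx
    have hmemJ' : x * incl y ∈ J := hJmul x (hinclJ y)
    have hQmem : v (x * incl y) ∈ Q := hIQ _ (by rwa [hvj hmemJ'])
    show ρ.hom (v (x * incl y)) ξ = (0 : H →L[ℂ] H) ξ
    rw [(hmemQ _).mp hQmem]
  · intro y hy
    have h : T (incl y) = 0 := hy
    rw [hTincl] at h
    exact (hmemQ y).mpr h
/-- Closure of a two-sided-ideal-like submodule is a closed ideal. -/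
lemma SS7.isClosedIdeal_closure {W : Type} [NonUnitalNormedRing W] [StarRing W]
    [NormedSpace ℂ W] (S : Submodule ℂ W)
    (hmul : ∀ w : W, ∀ s ∈ S, w * s ∈ S ∧ s * w ∈ S) :
    IsClosedIdeal W S.topologicalClosure := by
  refine ⟨?_, ?_, ?_⟩
  · rw [Submodule.topologicalClosure_coe]
    exact isClosed_closure
  · intro w s hs
    have hmaps : Set.MapsTo (fun u : W => w * u) (S : Set W) (S : Set W) :=
      fun u hu => (hmul w u hu).1
    have h := hmaps.closure (continuous_const.mul continuous_id)
    have hs' : s ∈ closure (S : Set W) := by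
      rwa [← Submodule.topologicalClosure_coe]
    have hmem : w * s ∈ ((S.topologicalClosure : Submodule ℂ W) : Set W) := by
      rw [Submodule.topologicalClosure_coe]
      exact h hs'
    exact hmem
  · intro w s hs
    have hmaps : Set.MapsTo (fun u : W => u * w) (S : Set W) (S : Set W) :=
      fun u hu => (hmul w u hu).2
    have h := hmaps.closure (continuous_id.mul continuous_const)
    have hs' : s ∈ closure (S : Set W) := by
      rwa [← Submodule.topologicalClosure_coe]
    have hmem : s * w ∈ ((S.topologicalClosure : Submodule ℂ W) : Set W) := by
      rw [Submodule.topologicalClosure_coe]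
      exact h hs'
    exact hmem

/-- Pulling back a primitive ideal along a quotient model gives a primitive ideal. -/
lemma SS7.comap_primitive_quotient
    (X : Type) [NonUnitalNormedRing X] [StarRing X] [NormedSpace ℂ X]
    (J : Submodule ℂ X)
    (Z : Type) [NonUnitalNormedRing Z] [StarRing Z] [NormedSpace ℂ Z]
    (mZ : QuotientModel X J Z)
    (Q' : Submodule ℂ Z) (hQ' : IsPrimitiveIdeal Z Q') :
    IsPrimitiveIdeal X (Submodule.comap (mZ.proj.toNonUnitalAlgHom : X →ₗ[ℂ] Z) Q') := by
  obtain ⟨σ, hirr, hker⟩ := hQ'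
  have hmem := SS7.prim_mem σ hker
  set Φ : X →⋆ₙₐ[ℂ] (σ.carrier →L[ℂ] σ.carrier) := σ.hom.comp mZ.proj with hΦ
  have hcontr : ∀ x, ‖Φ x‖ ≤ ‖x‖ := by
    intro x
    have h1 : Φ x = σ.hom (mZ.proj x) := rfl
    rw [h1]
    refine (σ.contractive _).trans ?_
    rw [mZ.norm_eq]
    have h0 : (0 : X) ∈ (J : Set X) := J.zero_mem
    calc Metric.infDist x (J : Set X) ≤ dist x 0 := Metric.infDist_le_dist_of_mem h0
      _ = ‖x‖ := by rw [dist_zero_right]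
  set Prep : StarRepOn X := { carrier := σ.carrier, hom := Φ, contractive := hcontr }
    with hPrep
  refine ⟨Prep, ⟨?_, ?_⟩, ?_⟩
  · obtain ⟨z, hz⟩ := hirr.1
    obtain ⟨x, rfl⟩ := mZ.surjective z
    exact ⟨x, hz⟩
  · intro U hUc hUinv
    apply hirr.2 U hUc
    intro z w hw
    obtain ⟨x, rfl⟩ := mZ.surjective z
    exact hUinv x w hw
  · ext x
    constructor
    · intro hx
      exact (hmem _).mp hx
    · intro hx
      exact (hmem (mZ.proj x)).mpr hx

/- STATEMENT 7 -/
theorem hasSpectralSynthesis_of_ideal_and_quotient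
    (X : Type) [NonUnitalNormedRing X] [StarRing X] [NormedSpace ℂ X] [CompleteSpace X]
    [IsScalarTower ℂ X X] [SMulCommClass ℂ X X] [StarModule ℂ X] [NormedStarGroup X]
    (hWX : WienerProperty X)
    (J : Submodule ℂ X) (hJ : IsClosedIdeal X J) (hJstar : IsStarIdeal X J)
    (hbai : HasBoundedApproxIdentity X J)
    (Y : Type) [NonUnitalNormedRing Y] [StarRing Y] [NormedSpace ℂ Y] [CompleteSpace Y]
    [IsScalarTower ℂ Y Y] [SMulCommClass ℂ Y Y] [StarModule ℂ Y] [NormedStarGroup Y]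
    (mY : SubalgebraModel X J Y) (hWY : WienerProperty Y) (hssY : HasSpectralSynthesis Y)
    (Z : Type) [NonUnitalNormedRing Z] [StarRing Z] [NormedSpace ℂ Z] [CompleteSpace Z]
    [IsScalarTower ℂ Z Z] [SMulCommClass ℂ Z Z] [StarModule ℂ Z] [NormedStarGroup Z]
    (mZ : QuotientModel X J Z) (hssZ : HasSpectralSynthesis Z) :
    HasSpectralSynthesis X := by
  intro E hE
  intro L hL hhull
  set K := kernelOf X E with hK
  have hEprim : ∀ P ∈ E, IsPrimitiveIdeal X P := hE.1
  have hKideal : IsClosedIdeal X K := SS7.isClosedIdeal_kernelOf hEprim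
  have hhullK : hullOf X (K : Set X) = E := hE.2
  have hLK : L ≤ K := by
    intro x hx
    rw [hK, kernelOf, Submodule.mem_sInf]
    intro P hP
    have hP' : P ∈ hullOf X (L : Set X) := by rw [hhull]; exact hP
    exact hP'.2 hx
  -- Y-side: the traces of L and K on J agree
  set inclL : Y →ₗ[ℂ] X := (mY.incl.toNonUnitalAlgHom : Y →ₗ[ℂ] X) with hinclL
  have hinclL_apply : ∀ y, inclL y = mY.incl y := fun _ => rfl
  set cY : Submodule ℂ X → Submodule ℂ Y := fun I => Submodule.comap inclL I with hcY
  have hmem_cY : ∀ (I : Submodule ℂ X) (y : Y), y ∈ cY I ↔ mY.incl y ∈ I := by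
    intro I y
    rw [hcY]
    exact Submodule.mem_comap
  have hinclcont : Continuous (fun y : Y => mY.incl y) :=
    AddMonoidHomClass.continuous_of_bound mY.incl 1
      (fun y => by rw [mY.isometric, one_mul])
  have hcYclosed : ∀ I : Submodule ℂ X, IsClosedIdeal X I → IsClosedIdeal Y (cY I) := by
    intro I hI
    refine ⟨?_, ?_, ?_⟩
    · have : ((cY I : Submodule ℂ Y) : Set Y) = (fun y : Y => mY.incl y) ⁻¹' (I : Set X) := by
        ext y; exact hmem_cY I y
      rw [this]
      exact IsClosed.preimage hinclcont hI.1
    · intro y a ha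
      rw [hmem_cY] at ha ⊢
      rw [map_mul]
      exact hI.2.1 _ _ ha
    · intro y a ha
      rw [hmem_cY] at ha ⊢
      rw [map_mul]
      exact hI.2.2 _ _ ha
  have hYdir : ∀ (I I' : Submodule ℂ X), IsClosedIdeal X I →
      hullOf X (I : Set X) = hullOf X (I' : Set X) →
      hullOf Y ((cY I : Submodule ℂ Y) : Set Y) ⊆
        hullOf Y ((cY I' : Submodule ℂ Y) : Set Y) := by
    intro I I' hIcl hII'
    rintro Q ⟨hQprim, hQsup⟩
    obtain ⟨P, hPprim, hIP, hPQ⟩ := SS7.extend_primitive X J hJ hJstar hbai Y mY I hIcl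
      Q hQprim (fun y hy => hQsup ((hmem_cY I y).mpr hy))
    have hPE : P ∈ hullOf X (I' : Set X) := by
      rw [← hII']
      exact ⟨hPprim, hIP⟩
    refine ⟨hQprim, ?_⟩
    intro y hy
    have : mY.incl y ∈ I' := (hmem_cY I' y).mp hy
    exact hPQ y (hPE.2 this)
  have hhullY : hullOf Y ((cY L : Submodule ℂ Y) : Set Y) =
      hullOf Y ((cY K : Submodule ℂ Y) : Set Y) := by
    apply Set.Subset.antisymm
    · exact hYdir L K hL (by rw [hhull, hhullK])
    · exact hYdir K L hKideal (by rw [hhull, hhullK])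
  have hcYLK : cY L = cY K := by
    have h1 : IsHkClosed Y (hullOf Y ((cY K : Submodule ℂ Y) : Set Y)) :=
      SS7.isHkClosed_hullOf _
    have h2 := hssY _ h1 (cY L) (hcYclosed L hL) hhullY
    have h3 := hssY _ h1 (cY K) (hcYclosed K hKideal) rfl
    exact h2.trans h3.symm
  have hKJL : ∀ x : X, x ∈ K → x ∈ J → x ∈ L := by
    intro x hxK hxJ
    have hxr : x ∈ Set.range mY.incl := by rw [mY.range_eq]; exact hxJ
    obtain ⟨y, rfl⟩ := hxr
    have : y ∈ cY K := (hmem_cY K y).mpr hxK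
    rw [← hcYLK] at this
    exact (hmem_cY L y).mp this
  -- Z-side: K ⊆ closure (L + J)
  set projL : X →ₗ[ℂ] Z := (mZ.proj.toNonUnitalAlgHom : X →ₗ[ℂ] Z) with hprojL
  have hprojL_apply : ∀ x, projL x = mZ.proj x := fun _ => rfl
  set dZ : Submodule ℂ X → Submodule ℂ Z :=
    fun I => (Submodule.map projL I).topologicalClosure with hdZ
  have hdZclosed : ∀ I : Submodule ℂ X, IsClosedIdeal X I → IsClosedIdeal Z (dZ I) := by
    intro I hI
    apply SS7.isClosedIdeal_closure
    intro z s hs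
    obtain ⟨x0, hx0, rfl⟩ := hs
    obtain ⟨w, rfl⟩ := mZ.surjective z
    constructor
    · refine ⟨w * x0, hI.2.1 w x0 hx0, ?_⟩
      rw [hprojL_apply, hprojL_apply, map_mul]
    · refine ⟨x0 * w, hI.2.2 w x0 hx0, ?_⟩
      rw [hprojL_apply, hprojL_apply, map_mul]
  have hZdir : ∀ (I I' : Submodule ℂ X),
      hullOf X (I : Set X) = hullOf X (I' : Set X) →
      hullOf Z ((dZ I : Submodule ℂ Z) : Set Z) ⊆
        hullOf Z ((dZ I' : Submodule ℂ Z) : Set Z) := by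
    intro I I' hII'
    rintro Q' ⟨hQ'prim, hQ'sup⟩
    set P := Submodule.comap projL Q' with hPdef
    have hPprim : IsPrimitiveIdeal X P :=
      SS7.comap_primitive_quotient X J Z mZ Q' hQ'prim
    have hIP : I ≤ P := by
      intro x hx
      show projL x ∈ Q'
      have h1 : projL x ∈ Submodule.map projL I := ⟨x, hx, rfl⟩
      have h2 : projL x ∈ dZ I := Submodule.le_topologicalClosure _ h1
      exact hQ'sup h2
    have hPE : P ∈ hullOf X (I' : Set X) := by
      rw [← hII']
      exact ⟨hPprim, hIP⟩
    refine ⟨hQ'prim, ?_⟩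
    have hsub : dZ I' ≤ Q' := by
      apply Submodule.topologicalClosure_minimal
      · rintro z ⟨x, hx, rfl⟩
        exact hPE.2 hx
      · exact (SS7.isClosedIdeal_of_primitive hQ'prim).1
    exact fun z hz => hsub hz
  have hhullZ : hullOf Z ((dZ L : Submodule ℂ Z) : Set Z) =
      hullOf Z ((dZ K : Submodule ℂ Z) : Set Z) := by
    apply Set.Subset.antisymm
    · exact hZdir L K (by rw [hhull, hhullK])
    · exact hZdir K L (by rw [hhull, hhullK])
  have hdZLK : dZ L = dZ K := by
    have h1 : IsHkClosed Z (hullOf Z ((dZ K : Submodule ℂ Z) : Set Z)) :=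
      SS7.isHkClosed_hullOf _
    have h2 := hssZ _ h1 (dZ L) (hdZclosed L hL) hhullZ
    have h3 := hssZ _ h1 (dZ K) (hdZclosed K hKideal) rfl
    exact h2.trans h3.symm
  have hKsup : ∀ x ∈ K, x ∈ closure ((L ⊔ J : Submodule ℂ X) : Set X) := by
    intro x hx
    rw [Metric.mem_closure_iff]
    intro ε hε
    have hx1 : projL x ∈ dZ K := Submodule.le_topologicalClosure _ ⟨x, hx, rfl⟩
    rw [← hdZLK] at hx1
    have hx2 : projL x ∈ closure ((Submodule.map projL L : Submodule ℂ Z) : Set Z) := by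
      rw [← Submodule.topologicalClosure_coe]
      exact hx1
    obtain ⟨z, hz, hdz⟩ := Metric.mem_closure_iff.mp hx2 (ε / 2) (by positivity)
    obtain ⟨y, hy, rfl⟩ := hz
    have hdist : Metric.infDist (x - y) (J : Set X) < ε / 2 := by
      have h1 : dist (projL x) (projL y) = ‖mZ.proj (x - y)‖ := by
        rw [dist_eq_norm, hprojL_apply, hprojL_apply, ← map_sub]
      rw [h1, mZ.norm_eq] at hdz
      exact hdz
    obtain ⟨j, hjJ, hj⟩ := (Metric.infDist_lt_iff ⟨0, J.zero_mem⟩).mp hdist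
    refine ⟨y + j, ?_, ?_⟩
    · exact Submodule.mem_sup.mpr ⟨y, hy, j, hjJ, rfl⟩
    · have : dist x (y + j) = dist (x - y) j := by
        rw [dist_eq_norm, dist_eq_norm]
        congr 1
        abel
      rw [this]
      linarith
  -- gluing
  obtain ⟨ι, l, e, C, hl, he, hlim⟩ := hbai
  haveI := hl
  have hC0 : 0 ≤ C := by
    haveI : Nonempty ι := Filter.nonempty_of_neBot l
    exact le_trans (norm_nonneg _) (he (Classical.arbitrary ι)).2
  have hKL : K ≤ L := by
    intro k hk
    have hclos : k ∈ closure (L : Set X) := by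
      rw [Metric.mem_closure_iff]
      intro ε hε
      set δ := ε / (C + 3) with hδ
      have hδpos : 0 < δ := by positivity
      obtain ⟨s, hs, hds⟩ := Metric.mem_closure_iff.mp (hKsup k hk) δ hδpos
      obtain ⟨a, haL, b, hbJ, rfl⟩ := Submodule.mem_sup.mp hs
      have hbe : ∀ᶠ m in l, dist (b * e m) b < δ :=
        Metric.tendsto_nhds.mp (hlim b hbJ).2 δ hδpos
      obtain ⟨m, hm⟩ := hbe.exists
      set b0 : X := a + (k * e m - a * e m) with hb0
      have hb0L : b0 ∈ L := by
        have h1 : k * e m ∈ L := by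
          apply hKJL
          · exact hKideal.2.2 (e m) k hk
          · exact hJ.2.1 k (e m) (he m).1
        have h2 : a * e m ∈ L := hL.2.2 (e m) a haL
        exact L.add_mem haL (L.sub_mem h1 h2)
      refine ⟨b0, hb0L, ?_⟩
      have hexp : (k - a - b) * e m = k * e m - a * e m - b * e m := by
        rw [sub_mul, sub_mul]
      have hval : k - b0 = (k - (a + b)) + (b - b * e m) - (k - a - b) * e m := by
        rw [hexp, hb0]
        abel
      have hr : ‖k - (a + b)‖ < δ := by
        rw [← dist_eq_norm]
        exact hds
      have hbm : ‖b - b * e m‖ < δ := by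
        rw [← dist_eq_norm, dist_comm]
        exact hm
      have hre : ‖(k - a - b) * e m‖ ≤ δ * C := by
        calc ‖(k - a - b) * e m‖ ≤ ‖k - a - b‖ * ‖e m‖ := norm_mul_le _ _
          _ ≤ δ * C := by
              apply mul_le_mul ?_ (he m).2 (norm_nonneg _) (le_of_lt hδpos)
              have : k - a - b = k - (a + b) := by abel
              rw [this]
              exact le_of_lt hr
      have htri : ‖k - b0‖ ≤ ‖k - (a + b)‖ + ‖b - b * e m‖ + ‖(k - a - b) * e m‖ := by
        rw [hval]
        refine (norm_sub_le _ _).trans ?_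
        exact add_le_add_left (norm_add_le _ _) _
      have hfin : ‖k - b0‖ < ε := by
        have h9 : δ * (C + 3) = ε := by
          rw [hδ]
          field_simp
        nlinarith
      rw [dist_eq_norm]
      exact hfin
    rwa [hL.1.closure_eq] at hclos
  exact le_antisymm hLK hKL
end
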